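/- arXiv:2410.23801 — 3 statements merged into one kernel-verified Lean document; each statement's English description precedes it below -/
import Mathlib

section
/- Let f be a bounded continuous function on ℝⁿ₊ × ℝ, and for (Y, s) ∈ ℝⁿ₊ × ℝ set F(Y, s) := sup_{r>0} (1/(2r)) ∫_{s-r}^{s+r} |f(Y, σ)| dσ (the Hardy–Littlewood maximal function of f in the time variable). Then for every a > 0 and every (x, t) ∈ ℝ^{n-1} × ℝ, N_a(F)(x, t) ≤ N_{2a}(f)(x, t) + 2 sup_{r>0} (1/(4r)) ∫_{t-2r}^{t+2r} N_a(f)(x, σ) dσ. -/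
open MeasureTheory Set

/-- The parabolic cone with vertex `(x, t)` and aperture `a`:
`Γ_a(x,t) = {(y, yₙ, s) : yₙ > 0, |y - x| + |s - t|^{1/2} ≤ a yₙ}`. -/
def paraCone (m : ℕ) (a : ℝ) (x : EuclideanSpace ℝ (Fin m)) (t : ℝ) :
    Set (EuclideanSpace ℝ (Fin m) × ℝ × ℝ) :=
  {p | 0 < p.2.1 ∧ ‖p.1 - x‖ + |p.2.2 - t| ^ ((1 : ℝ) / 2) ≤ a * p.2.1}

/-- The nontangential maximal function `N_a(g)(x,t) = sup_{(Y,s) ∈ Γ_a(x,t)} |g(Y,s)|`. -/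
noncomputable def ntMax (m : ℕ) (a : ℝ) (g : EuclideanSpace ℝ (Fin m) × ℝ × ℝ → ℝ)
    (x : EuclideanSpace ℝ (Fin m)) (t : ℝ) : ℝ :=
  ⨆ p ∈ paraCone m a x t, |g p|

/-- The Hardy–Littlewood maximal function of `f` in the time variable:
`F(Y,s) = sup_{r>0} (1/(2r)) ∫_{s-r}^{s+r} |f(Y,σ)| dσ`. -/
noncomputable def timeMax (m : ℕ) (f : EuclideanSpace ℝ (Fin m) × ℝ × ℝ → ℝ)
    (p : EuclideanSpace ℝ (Fin m) × ℝ × ℝ) : ℝ :=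
  ⨆ r : {r : ℝ // 0 < r},
    (1 / (2 * (r : ℝ))) * ∫ σ in Icc (p.2.2 - (r : ℝ)) (p.2.2 + (r : ℝ)), |f (p.1, p.2.1, σ)|

section Aux

lemma real_biSup_le {α : Type*} {S : Set α} {g : α → ℝ} {B : ℝ} (hB : 0 ≤ B)
    (h : ∀ p ∈ S, g p ≤ B) : (⨆ p ∈ S, g p) ≤ B :=
  Real.iSup_le (fun p => Real.iSup_le (fun hp => h p hp) hB) hB

lemma real_le_biSup {α : Type*} {S : Set α} {g : α → ℝ} {B : ℝ}
    (h : ∀ p ∈ S, g p ≤ B) {p : α} (hp : p ∈ S) : g p ≤ ⨆ q ∈ S, g q := by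
  have hb : BddAbove (Set.range fun q => ⨆ _ : q ∈ S, g q) := by
    refine ⟨max B 0, ?_⟩
    rintro _ ⟨q, rfl⟩
    exact Real.iSup_le (fun hq => (h q hq).trans (le_max_left _ _)) (le_max_right _ _)
  have heq : g p = ⨆ _ : p ∈ S, g p := by
    haveI : Nonempty (p ∈ S) := ⟨hp⟩
    exact (ciSup_const).symm
  rw [heq]
  exact le_ciSup hb p

lemma sqrt_add_le_aux {x y : ℝ} (hx : 0 ≤ x) (hy : 0 ≤ y) :
    Real.sqrt (x + y) ≤ Real.sqrt x + Real.sqrt y := by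
  rw [Real.sqrt_le_left (by positivity)]
  nlinarith [Real.sq_sqrt hx, Real.sq_sqrt hy, Real.sqrt_nonneg x, Real.sqrt_nonneg y]

theorem key (m : ℕ)
    (f : EuclideanSpace ℝ (Fin m) × ℝ × ℝ → ℝ)
    (hf_cont : ContinuousOn f {p | 0 < p.2.1}) (B : ℝ)
    (hf_bd : ∀ p : EuclideanSpace ℝ (Fin m) × ℝ × ℝ, 0 < p.2.1 → |f p| ≤ B)
    (a : ℝ) (ha : 0 < a) (x : EuclideanSpace ℝ (Fin m)) (t : ℝ) :
    ntMax m a (timeMax m f) x t ≤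
      ntMax m (2 * a) f x t +
        2 * ⨆ r : {r : ℝ // 0 < r},
          (1 / (4 * (r : ℝ))) *
            ∫ σ in Icc (t - 2 * (r : ℝ)) (t + 2 * (r : ℝ)), ntMax m a f x σ := by
  classical
  haveI : Nonempty {r : ℝ // 0 < r} := ⟨⟨1, one_pos⟩⟩
  have hB : 0 ≤ B := le_trans (abs_nonneg _) (hf_bd (x, 1, t) one_pos)
  have hzero_rpow : (0 : ℝ) ^ ((1 : ℝ) / 2) = 0 :=
    Real.zero_rpow (by norm_num)
  -- base point membership
  have hmem : ∀ (a' : ℝ), 0 < a' → ∀ (x' : EuclideanSpace ℝ (Fin m)) (t' : ℝ),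
      ((x', (1 : ℝ), t') : EuclideanSpace ℝ (Fin m) × ℝ × ℝ) ∈ paraCone m a' x' t' := by
    intro a' ha' x' t'
    refine ⟨one_pos, ?_⟩
    simp only [sub_self, norm_zero, abs_zero, hzero_rpow, add_zero, zero_add, mul_one]
    exact ha'.le
  have hnt_le : ∀ (a' : ℝ) (x' : EuclideanSpace ℝ (Fin m)) (t' : ℝ),
      ntMax m a' f x' t' ≤ B := fun a' x' t' =>
    real_biSup_le hB (fun p hp => hf_bd p hp.1)
  have hnt_nonneg : ∀ (a' : ℝ), 0 < a' → ∀ (x' : EuclideanSpace ℝ (Fin m)) (t' : ℝ),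
      0 ≤ ntMax m a' f x' t' := fun a' ha' x' t' =>
    (abs_nonneg _).trans (real_le_biSup (fun p hp => hf_bd p hp.1) (hmem a' ha' x' t'))
  have hopen : IsOpen {p : EuclideanSpace ℝ (Fin m) × ℝ × ℝ | 0 < p.2.1} :=
    isOpen_lt continuous_const (continuous_snd.fst)
  -- measurability of σ ↦ ntMax m a f x σ
  set u : ℕ → (EuclideanSpace ℝ (Fin m) × ℝ × ℝ) := TopologicalSpace.denseSeq _ with hu_def
  have hu : DenseRange u := TopologicalSpace.denseRange_denseSeq _
  set Γ : Set (EuclideanSpace ℝ (Fin m) × ℝ × ℝ) := paraCone m a x 0 with hΓ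
  set h : ℕ → ℝ → ℝ := fun k σ =>
    if u k ∈ Γ then |f ((u k).1, (u k).2.1, (u k).2.2 + σ)| else 0 with hh
  have hcont : ∀ k, Continuous (h k) := by
    intro k
    by_cases hk : u k ∈ Γ
    · simp only [hh, if_pos hk]
      have hpath : Continuous fun σ : ℝ =>
          (((u k).1, (u k).2.1, (u k).2.2 + σ) : EuclideanSpace ℝ (Fin m) × ℝ × ℝ) := by
        fun_prop
      have := (hf_cont.comp_continuous hpath (fun σ => hk.1)).abs
      exact this
    · simp only [hh, if_neg hk]; exact continuous_const
  have hbdk : ∀ k σ, h k σ ≤ B := by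
    intro k σ
    by_cases hk : u k ∈ Γ
    · simpa only [hh, if_pos hk] using hf_bd ((u k).1, (u k).2.1, (u k).2.2 + σ) hk.1
    · simpa only [hh, if_neg hk] using hB
  have hnnk : ∀ k σ, 0 ≤ h k σ := by
    intro k σ
    by_cases hk : u k ∈ Γ
    · simp only [hh, if_pos hk]; exact abs_nonneg _
    · simp only [hh, if_neg hk]; exact le_refl _
  have hsup : ∀ σ : ℝ, ntMax m a f x σ = ⨆ k, h k σ := by
    intro σ
    have hbdd : BddAbove (Set.range fun k => h k σ) :=
      ⟨B, by rintro _ ⟨k, rfl⟩; exact hbdk k σ⟩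
    have hGnn : 0 ≤ ⨆ k, h k σ := (hnnk 0 σ).trans (le_ciSup hbdd 0)
    apply le_antisymm
    · refine Real.iSup_le (fun p => Real.iSup_le (fun hp => ?_) hGnn) hGnn
      -- |f p| ≤ ⨆ k, h k σ  via density
      refine le_of_forall_pos_le_add (fun ε hε => ?_)
      have hppos : 0 < p.2.1 := hp.1
      have hfc : ContinuousAt f p := hf_cont.continuousAt (hopen.mem_nhds hppos)
      obtain ⟨δ, hδpos, hδ⟩ := Metric.continuousAt_iff.mp hfc ε hε
      -- the translated point
      set q : EuclideanSpace ℝ (Fin m) × ℝ × ℝ := (p.1, p.2.1, p.2.2 - σ) with hq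
      have hqΓ : q ∈ Γ := by
        refine ⟨hppos, ?_⟩
        have := hp.2
        simpa only [hq, sub_zero] using this
      -- open set of strict cone points
      set U : Set (EuclideanSpace ℝ (Fin m) × ℝ × ℝ) :=
        {w | 0 < w.2.1 ∧ ‖w.1 - x‖ + |w.2.2 - 0| ^ ((1 : ℝ) / 2) < a * w.2.1} with hU
      have hUopen : IsOpen U := by
        have hφ : Continuous fun w : EuclideanSpace ℝ (Fin m) × ℝ × ℝ =>
            ‖w.1 - x‖ + |w.2.2 - 0| ^ ((1 : ℝ) / 2) := by
          have : Continuous fun w : EuclideanSpace ℝ (Fin m) × ℝ × ℝ =>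
              ‖w.1 - x‖ + Real.sqrt |w.2.2 - 0| := by fun_prop
          simpa only [Real.sqrt_eq_rpow] using this
        exact (isOpen_lt continuous_const (continuous_snd.fst)).inter
          (isOpen_lt hφ (continuous_const.mul continuous_snd.fst))
      have hUsub : U ⊆ Γ := fun w hw => ⟨hw.1, le_of_lt hw.2⟩
      -- perturbed point
      set q' : EuclideanSpace ℝ (Fin m) × ℝ × ℝ := (p.1, p.2.1 + δ / 2, p.2.2 - σ) with hq'
      have hq'U : q' ∈ U := by
        constructor
        · simp only [hq']; positivity
        · have h1 : ‖p.1 - x‖ + |p.2.2 - σ - 0| ^ ((1 : ℝ) / 2) ≤ a * p.2.1 := by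
            simpa only [sub_zero] using hp.2
        -- strictness
          have : a * p.2.1 < a * (p.2.1 + δ / 2) := by nlinarith
          exact lt_of_le_of_lt h1 this
      obtain ⟨ρ, hρpos, hρ⟩ := Metric.isOpen_iff.mp hUopen q' hq'U
      obtain ⟨k, hk⟩ := hu.exists_dist_lt q' (lt_min hρpos (half_pos hδpos))
      have hkU : u k ∈ U := hρ (by
        rw [Metric.mem_ball, dist_comm]
        exact lt_of_lt_of_le hk (min_le_left _ _))
      have hkΓ : u k ∈ Γ := hUsub hkU
      have hdistq : dist (u k) q < δ := by
        have h1 : dist (u k) q' < δ / 2 := by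
          rw [dist_comm]; exact lt_of_lt_of_le hk (min_le_right _ _)
        have h2 : dist q' q = δ / 2 := by
          simp only [hq', hq, Prod.dist_eq, dist_self, Real.dist_eq,
            add_sub_cancel_left, abs_of_pos (half_pos hδpos)]
          simp [max_eq_right, le_of_lt (half_pos hδpos)]
        calc dist (u k) q ≤ dist (u k) q' + dist q' q := dist_triangle _ _ _
          _ < δ / 2 + δ / 2 := by rw [h2]; linarith
          _ = δ := by ring
      have hdistp : dist ((u k).1, (u k).2.1, (u k).2.2 + σ) p < δ := by
        have hqp : ((q.1, q.2.1, q.2.2 + σ) : EuclideanSpace ℝ (Fin m) × ℝ × ℝ) = p := by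
          simp only [hq]
          exact Prod.ext rfl (Prod.ext rfl (sub_add_cancel _ _))
        calc dist ((u k).1, (u k).2.1, (u k).2.2 + σ) p
            = dist (((u k).1, (u k).2.1, (u k).2.2 + σ) :
                EuclideanSpace ℝ (Fin m) × ℝ × ℝ) (q.1, q.2.1, q.2.2 + σ) := by rw [hqp]
          _ = dist (u k) q := by
              simp only [Prod.dist_eq, Real.dist_eq, add_sub_add_right_eq_sub]
          _ < δ := hdistq
      have hfeps : |f p| ≤ |f ((u k).1, (u k).2.1, (u k).2.2 + σ)| + ε := by
        have := hδ hdistp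
        rw [Real.dist_eq] at this
        have habs := abs_sub_abs_le_abs_sub (f p) (f ((u k).1, (u k).2.1, (u k).2.2 + σ))
        rw [abs_sub_comm] at this
        linarith [le_abs_self (|f p| - |f ((u k).1, (u k).2.1, (u k).2.2 + σ)|)]
      have hkh : h k σ = |f ((u k).1, (u k).2.1, (u k).2.2 + σ)| := by
        simp only [hh, if_pos hkΓ]
      calc |f p| ≤ h k σ + ε := by rw [hkh]; exact hfeps
        _ ≤ (⨆ k, h k σ) + ε := by
            have := le_ciSup hbdd k
            linarith
    · refine Real.iSup_le (fun k => ?_) (hnt_nonneg a ha x σ)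
      by_cases hk : u k ∈ Γ
      · have hmem' : (((u k).1, (u k).2.1, (u k).2.2 + σ) :
            EuclideanSpace ℝ (Fin m) × ℝ × ℝ) ∈ paraCone m a x σ := by
          refine ⟨hk.1, ?_⟩
          have := hk.2
          simpa only [sub_zero, add_sub_cancel_right] using this
        have := real_le_biSup (B := B) (fun p hp => hf_bd p hp.1) hmem'
        simpa only [hh, if_pos hk, ntMax] using this
      · simp only [hh, if_neg hk]
        exact hnt_nonneg a ha x σ
  have hg_meas : Measurable fun σ : ℝ => ntMax m a f x σ := by
    have : (fun σ : ℝ => ntMax m a f x σ) = fun σ => ⨆ k, h k σ := funext hsup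
    rw [this]
    exact Measurable.iSup (fun k => (hcont k).measurable)
  have hg_int : ∀ c d : ℝ, IntegrableOn (fun σ => ntMax m a f x σ) (Icc c d) := by
    intro c d
    refine Integrable.mono' (g := fun _ => B) (integrableOn_const measure_Icc_lt_top.ne)
      hg_meas.aestronglyMeasurable ?_
    filter_upwards with σ
    rw [Real.norm_eq_abs, abs_of_nonneg (hnt_nonneg a ha x σ)]
    exact hnt_le a x σ
  -- the second supremum S
  set S : ℝ := ⨆ r : {r : ℝ // 0 < r},
    (1 / (4 * (r : ℝ))) *
      ∫ σ in Icc (t - 2 * (r : ℝ)) (t + 2 * (r : ℝ)), ntMax m a f x σ with hS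
  have hterm_nonneg : ∀ r : {r : ℝ // 0 < r},
      0 ≤ (1 / (4 * (r : ℝ))) *
        ∫ σ in Icc (t - 2 * (r : ℝ)) (t + 2 * (r : ℝ)), ntMax m a f x σ := by
    intro r
    have h1 : 0 ≤ ∫ σ in Icc (t - 2 * (r : ℝ)) (t + 2 * (r : ℝ)), ntMax m a f x σ :=
      integral_nonneg (fun σ => hnt_nonneg a ha x σ)
    have hr : (0:ℝ) < r := r.2
    exact mul_nonneg (by positivity) h1
  have hterm_le : ∀ r : {r : ℝ // 0 < r},
      (1 / (4 * (r : ℝ))) *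
        ∫ σ in Icc (t - 2 * (r : ℝ)) (t + 2 * (r : ℝ)), ntMax m a f x σ ≤ B := by
    intro r
    have hr : (0 : ℝ) < r := r.2
    have h1 : ∫ σ in Icc (t - 2 * (r : ℝ)) (t + 2 * (r : ℝ)), ntMax m a f x σ ≤
        ∫ _ in Icc (t - 2 * (r : ℝ)) (t + 2 * (r : ℝ)), B := by
      refine setIntegral_mono_on (hg_int _ _)
        (integrableOn_const measure_Icc_lt_top.ne) measurableSet_Icc ?_
      intro σ _; exact hnt_le a x σ
    have h2 : ∫ _ in Icc (t - 2 * (r : ℝ)) (t + 2 * (r : ℝ)), B = 4 * (r : ℝ) * B := by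
      rw [setIntegral_const, measureReal_def, Real.volume_Icc, smul_eq_mul]
      rw [ENNReal.toReal_ofReal (by linarith)]
      ring_nf
    calc (1 / (4 * (r : ℝ))) *
        ∫ σ in Icc (t - 2 * (r : ℝ)) (t + 2 * (r : ℝ)), ntMax m a f x σ ≤
        (1 / (4 * (r : ℝ))) * (4 * (r : ℝ) * B) := by
          apply mul_le_mul_of_nonneg_left _ (by positivity)
          rw [← h2]; exact h1
      _ = B := by field_simp
  have hSbdd : BddAbove (Set.range fun r : {r : ℝ // 0 < r} =>
      (1 / (4 * (r : ℝ))) *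
        ∫ σ in Icc (t - 2 * (r : ℝ)) (t + 2 * (r : ℝ)), ntMax m a f x σ) :=
    ⟨B, by rintro _ ⟨r, rfl⟩; exact hterm_le r⟩
  have hS_nonneg : 0 ≤ S := (hterm_nonneg ⟨1, one_pos⟩).trans (le_ciSup hSbdd ⟨1, one_pos⟩)
  set N₂ : ℝ := ntMax m (2 * a) f x t with hN₂
  have hN₂nn : 0 ≤ N₂ := hnt_nonneg (2 * a) (by linarith) x t
  have hRHS0 : 0 ≤ N₂ + 2 * S := by linarith
  refine Real.iSup_le (fun p => Real.iSup_le (fun hp => ?_) hRHS0) hRHS0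
  -- now p ∈ paraCone m a x t ; bound |timeMax m f p|
  obtain ⟨hyn, hcone⟩ := hp
  have hfY_cont : Continuous fun σ : ℝ => |f (p.1, p.2.1, σ)| := by
    have hpath : Continuous fun σ : ℝ =>
        ((p.1, p.2.1, σ) : EuclideanSpace ℝ (Fin m) × ℝ × ℝ) := by fun_prop
    exact (hf_cont.comp_continuous hpath (fun σ => hyn)).abs
  have hfY_int : ∀ c d : ℝ, IntegrableOn (fun σ => |f (p.1, p.2.1, σ)|) (Icc c d) :=
    fun c d => hfY_cont.integrableOn_Icc
  -- sqrt forms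
  have hcone' : ‖p.1 - x‖ + Real.sqrt |p.2.2 - t| ≤ a * p.2.1 := by
    rwa [Real.sqrt_eq_rpow]
  have hsqrt_st : Real.sqrt |p.2.2 - t| ≤ a * p.2.1 := by
    have := norm_nonneg (p.1 - x); linarith
  have hst : |p.2.2 - t| ≤ (a * p.2.1) ^ 2 :=
    (Real.sqrt_le_left (by positivity)).mp hsqrt_st
  -- per-radius bound
  have havg : ∀ r : {r : ℝ // 0 < r},
      (1 / (2 * (r : ℝ))) * ∫ σ in Icc (p.2.2 - (r : ℝ)) (p.2.2 + (r : ℝ)),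
        |f (p.1, p.2.1, σ)| ≤ N₂ + 2 * S := by
    intro r
    have hr : (0 : ℝ) < r := r.2
    rcases le_or_gt (r : ℝ) ((a * p.2.1) ^ 2) with hr1 | hr2
    · -- small radius: use the wide cone
      have hptmem : ∀ σ ∈ Icc (p.2.2 - (r : ℝ)) (p.2.2 + (r : ℝ)),
          ((p.1, p.2.1, σ) : EuclideanSpace ℝ (Fin m) × ℝ × ℝ) ∈ paraCone m (2 * a) x t := by
        intro σ hσ
        refine ⟨hyn, ?_⟩
        have hσs : |σ - p.2.2| ≤ (r : ℝ) := by
          rw [abs_le]; constructor <;> [linarith [hσ.1]; linarith [hσ.2]]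
        have h1 : |σ - t| ≤ |σ - p.2.2| + |p.2.2 - t| := abs_sub_le _ _ _
        have h2 : Real.sqrt |σ - t| ≤ Real.sqrt (|σ - p.2.2| + |p.2.2 - t|) :=
          Real.sqrt_le_sqrt h1
        have h3 : Real.sqrt (|σ - p.2.2| + |p.2.2 - t|) ≤
            Real.sqrt |σ - p.2.2| + Real.sqrt |p.2.2 - t| :=
          sqrt_add_le_aux (abs_nonneg _) (abs_nonneg _)
        have h4 : Real.sqrt |σ - p.2.2| ≤ a * p.2.1 := by
          refine le_trans (Real.sqrt_le_sqrt hσs) ?_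
          rw [show (a * p.2.1) = Real.sqrt ((a * p.2.1) ^ 2) from
            (Real.sqrt_sq (by positivity)).symm]
          exact Real.sqrt_le_sqrt hr1
        show ‖p.1 - x‖ + |σ - t| ^ ((1 : ℝ) / 2) ≤ 2 * a * p.2.1
        rw [← Real.sqrt_eq_rpow]
        nlinarith [norm_nonneg (p.1 - x)]
      have hbnd : ∀ σ ∈ Icc (p.2.2 - (r : ℝ)) (p.2.2 + (r : ℝ)),
          |f (p.1, p.2.1, σ)| ≤ N₂ := fun σ hσ =>
        real_le_biSup (B := B) (fun q hq => hf_bd q hq.1) (hptmem σ hσ)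
      have h1 : ∫ σ in Icc (p.2.2 - (r : ℝ)) (p.2.2 + (r : ℝ)), |f (p.1, p.2.1, σ)| ≤
          2 * (r : ℝ) * N₂ := by
        have := setIntegral_mono_on (hfY_int _ _)
          (integrableOn_const measure_Icc_lt_top.ne) measurableSet_Icc hbnd
        rw [setIntegral_const, measureReal_def, Real.volume_Icc, smul_eq_mul,
          ENNReal.toReal_ofReal (by linarith)] at this
        calc ∫ σ in Icc (p.2.2 - (r : ℝ)) (p.2.2 + (r : ℝ)), |f (p.1, p.2.1, σ)|
            ≤ (p.2.2 + (r : ℝ) - (p.2.2 - (r : ℝ))) * N₂ := this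
          _ = 2 * (r : ℝ) * N₂ := by ring_nf
      calc (1 / (2 * (r : ℝ))) *
          ∫ σ in Icc (p.2.2 - (r : ℝ)) (p.2.2 + (r : ℝ)), |f (p.1, p.2.1, σ)|
          ≤ (1 / (2 * (r : ℝ))) * (2 * (r : ℝ) * N₂) :=
            mul_le_mul_of_nonneg_left h1 (by positivity)
        _ = N₂ := by field_simp
        _ ≤ N₂ + 2 * S := by linarith
    · -- large radius: use the maximal function in time
      have hpoint : ∀ σ : ℝ, |f (p.1, p.2.1, σ)| ≤ ntMax m a f x σ := by
        intro σ
        have hmemσ : ((p.1, p.2.1, σ) : EuclideanSpace ℝ (Fin m) × ℝ × ℝ) ∈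
            paraCone m a x σ := by
          refine ⟨hyn, ?_⟩
          show ‖p.1 - x‖ + |σ - σ| ^ ((1 : ℝ) / 2) ≤ a * p.2.1
          rw [sub_self, abs_zero, hzero_rpow, add_zero]
          have := Real.sqrt_nonneg |p.2.2 - t|; linarith
        exact real_le_biSup (B := B) (fun q hq => hf_bd q hq.1) hmemσ
      have hsub : Icc (p.2.2 - (r : ℝ)) (p.2.2 + (r : ℝ)) ⊆
          Icc (t - 2 * (r : ℝ)) (t + 2 * (r : ℝ)) := by
        have := abs_le.mp hst
        exact Icc_subset_Icc (by linarith [this.1, this.2]) (by linarith [this.1, this.2])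
      have h1 : ∫ σ in Icc (p.2.2 - (r : ℝ)) (p.2.2 + (r : ℝ)), |f (p.1, p.2.1, σ)| ≤
          ∫ σ in Icc (p.2.2 - (r : ℝ)) (p.2.2 + (r : ℝ)), ntMax m a f x σ :=
        setIntegral_mono_on (hfY_int _ _) (hg_int _ _) measurableSet_Icc
          (fun σ _ => hpoint σ)
      have h2 : ∫ σ in Icc (p.2.2 - (r : ℝ)) (p.2.2 + (r : ℝ)), ntMax m a f x σ ≤
          ∫ σ in Icc (t - 2 * (r : ℝ)) (t + 2 * (r : ℝ)), ntMax m a f x σ :=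
        setIntegral_mono_set (hg_int _ _)
          (Filter.Eventually.of_forall (fun σ => hnt_nonneg a ha x σ))
          (HasSubset.Subset.eventuallyLE hsub)
      have hterm : (1 / (4 * (r : ℝ))) *
          ∫ σ in Icc (t - 2 * (r : ℝ)) (t + 2 * (r : ℝ)), ntMax m a f x σ ≤ S :=
        le_ciSup hSbdd r
      calc (1 / (2 * (r : ℝ))) *
          ∫ σ in Icc (p.2.2 - (r : ℝ)) (p.2.2 + (r : ℝ)), |f (p.1, p.2.1, σ)|
          ≤ (1 / (2 * (r : ℝ))) *
            ∫ σ in Icc (t - 2 * (r : ℝ)) (t + 2 * (r : ℝ)), ntMax m a f x σ :=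
            mul_le_mul_of_nonneg_left (h1.trans h2) (by positivity)
        _ = 2 * ((1 / (4 * (r : ℝ))) *
            ∫ σ in Icc (t - 2 * (r : ℝ)) (t + 2 * (r : ℝ)), ntMax m a f x σ) := by ring
        _ ≤ 2 * S := by linarith
        _ ≤ N₂ + 2 * S := by linarith
  -- conclude
  have havg_nonneg : ∀ r : {r : ℝ // 0 < r},
      0 ≤ (1 / (2 * (r : ℝ))) *
        ∫ σ in Icc (p.2.2 - (r : ℝ)) (p.2.2 + (r : ℝ)), |f (p.1, p.2.1, σ)| := by
    intro r
    have hr : (0 : ℝ) < r := r.2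
    have : 0 ≤ ∫ σ in Icc (p.2.2 - (r : ℝ)) (p.2.2 + (r : ℝ)), |f (p.1, p.2.1, σ)| :=
      integral_nonneg (fun σ => abs_nonneg _)
    positivity
  have htm_nonneg : 0 ≤ timeMax m f p := by
    have hbdd : BddAbove (Set.range fun r : {r : ℝ // 0 < r} =>
        (1 / (2 * (r : ℝ))) *
          ∫ σ in Icc (p.2.2 - (r : ℝ)) (p.2.2 + (r : ℝ)), |f (p.1, p.2.1, σ)|) :=
      ⟨N₂ + 2 * S, by rintro _ ⟨r, rfl⟩; exact havg r⟩
    exact (havg_nonneg ⟨1, one_pos⟩).trans (le_ciSup hbdd ⟨1, one_pos⟩)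
  rw [abs_of_nonneg htm_nonneg]
  exact ciSup_le havg

end Aux

/-- pointwise bound
`N_a(F)(x,t) ≤ N_{2a}(f)(x,t) + 2 sup_{r>0} (1/(4r)) ∫_{t-2r}^{t+2r} N_a(f)(x,σ) dσ`
for `f` bounded and continuous on `ℝⁿ₊ × ℝ` and `F` its maximal function in time. -/
theorem stmt2 (n : ℕ) (hn : 2 ≤ n)
    (f : EuclideanSpace ℝ (Fin (n - 1)) × ℝ × ℝ → ℝ)
    (hf_cont : ContinuousOn f {p | 0 < p.2.1}) (B : ℝ)
    (hf_bd : ∀ p : EuclideanSpace ℝ (Fin (n - 1)) × ℝ × ℝ, 0 < p.2.1 → |f p| ≤ B)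
    (a : ℝ) (ha : 0 < a) (x : EuclideanSpace ℝ (Fin (n - 1))) (t : ℝ) :
    ntMax (n - 1) a (timeMax (n - 1) f) x t ≤
      ntMax (n - 1) (2 * a) f x t +
        2 * ⨆ r : {r : ℝ // 0 < r},
          (1 / (4 * (r : ℝ))) *
            ∫ σ in Icc (t - 2 * (r : ℝ)) (t + 2 * (r : ℝ)), ntMax (n - 1) a f x σ :=
  key (n - 1) f hf_cont B hf_bd a ha x t
end

section
/- Let p > 1, κ > 0, let f ≥ 0 be a measurable function on ℝⁿ₊ × ℝ, and let g ≥ 0 be a measurable function on ℝⁿ₊ (independent of t). Assume the measure dν = f(X, t)^p g(X) dX dt is a Carleson measure on ℝⁿ₊ × ℝ with norm ‖ν‖_C. Define M_{κ x_n²}(f(X, ·))(t) := sup {(1/|I|) ∫_I f(X, s) ds : t ∈ I, |I| < κ x_n²} (localized uncentered maximal function in time at scale κ x_n²). Then the measure dν̃ = M_{κ x_n²}(f(X, ·))(t)^p g(X) dX dt is also a Carleson measure, and ‖ν̃‖_C ≤ C max{1, κ} ‖ν‖_C for a constant C depending only on n and p. -/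
open MeasureTheory Set ENNReal

/-- The localized uncentered maximal function in the time variable at scale `R`,
valued in `ℝ≥0∞`: `sup {(1/|I|) ∫_I f : t ∈ I, |I| < R}`. -/
noncomputable def tMaxE (R : ℝ) (f : ℝ → ℝ) (t : ℝ) : ℝ≥0∞ :=
  ⨆ (c : ℝ) (d : ℝ) (_ : c < d) (_ : d - c < R) (_ : t ∈ Ioo c d),
    ENNReal.ofReal ((d - c)⁻¹) * ∫⁻ s in Ioo c d, ENNReal.ofReal (f s)

/-- The Carleson box `T(Q_r(x₀,t₀))` over a boundary parabolic cube in `ℝⁿ₊ × ℝ`,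
with points written as `(x, xₙ, t)`. -/
def carlesonBox (m : ℕ) (x₀ : Fin m → ℝ) (t₀ r : ℝ) : Set ((Fin m → ℝ) × ℝ × ℝ) :=
  {q | (∀ i, |q.1 i - x₀ i| < r) ∧ 0 < q.2.1 ∧ q.2.1 < r ∧ |q.2.2 - t₀| < r ^ 2}

namespace Stmt5Aux

lemma le_tMaxE {R : ℝ} {f : ℝ → ℝ} {t c d : ℝ} (h1 : c < d) (h2 : d - c < R)
    (h3 : t ∈ Ioo c d) :
    ENNReal.ofReal ((d - c)⁻¹) * ∫⁻ s in Ioo c d, ENNReal.ofReal (f s) ≤ tMaxE R f t := by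
  unfold tMaxE
  refine le_trans ?_ (le_iSup _ c)
  refine le_trans ?_ (le_iSup _ d)
  refine le_trans ?_ (le_iSup _ h1)
  refine le_trans ?_ (le_iSup _ h2)
  exact le_iSup (fun _ : t ∈ Ioo c d => ENNReal.ofReal ((d - c)⁻¹) *
    ∫⁻ s in Ioo c d, ENNReal.ofReal (f s)) h3

lemma tMaxE_le {R : ℝ} {f : ℝ → ℝ} {t : ℝ} {X : ℝ≥0∞}
    (h : ∀ c d, c < d → d - c < R → t ∈ Ioo c d →
      ENNReal.ofReal ((d - c)⁻¹) * (∫⁻ s in Ioo c d, ENNReal.ofReal (f s)) ≤ X) :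
    tMaxE R f t ≤ X := by
  unfold tMaxE
  exact iSup_le fun c => iSup_le fun d => iSup_le fun h1 => iSup_le fun h2 => iSup_le fun h3 =>
    h c d h1 h2 h3

lemma exists_of_lt_tMaxE {R : ℝ} {f : ℝ → ℝ} {t : ℝ} {a : ℝ≥0∞} (h : a < tMaxE R f t) :
    ∃ c d, c < d ∧ d - c < R ∧ t ∈ Ioo c d ∧
      a < ENNReal.ofReal ((d - c)⁻¹) * ∫⁻ s in Ioo c d, ENNReal.ofReal (f s) := by
  by_contra hc
  push_neg at hc
  exact absurd (tMaxE_le fun c d h1 h2 h3 => hc c d h1 h2 h3) (not_le.2 h)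

lemma isOpen_tMaxE_superlevel (R : ℝ) (f : ℝ → ℝ) (a : ℝ≥0∞) :
    IsOpen {t | a < tMaxE R f t} := by
  rw [isOpen_iff_forall_mem_open]
  intro t ht
  obtain ⟨c, d, h1, h2, h3, h4⟩ := exists_of_lt_tMaxE ht
  exact ⟨Ioo c d, fun t' ht' => lt_of_lt_of_le h4 (le_tMaxE h1 h2 ht'), isOpen_Ioo, h3⟩

lemma measurable_tMaxE (R : ℝ) (f : ℝ → ℝ) : Measurable (tMaxE R f) :=
  measurable_of_Ioi fun a => (isOpen_tMaxE_superlevel R f a).measurableSet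

/-- Weak type (1,1) bound. -/
lemma weak_type (R : ℝ) (f : ℝ → ℝ) (lam : ℝ≥0∞) (h0 : lam ≠ 0) (htop : lam ≠ ∞) :
    volume {t | lam < tMaxE R f t} ≤ 4 * lam⁻¹ * ∫⁻ s, ENNReal.ofReal (f s) := by
  set L := ∫⁻ s, ENNReal.ofReal (f s) with hL
  rw [(isOpen_tMaxE_superlevel R f lam).measure_eq_iSup_isCompact]
  refine iSup_le fun K => iSup_le fun hK => iSup_le fun hKc => ?_
  -- choose intervals
  have hch : ∀ t : ℝ, ∃ c d : ℝ, t ∈ K → (c < d ∧ d - c < R ∧ t ∈ Ioo c d ∧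
      lam * ENNReal.ofReal (d - c) ≤ ∫⁻ s in Ioo c d, ENNReal.ofReal (f s)) := by
    intro t
    by_cases ht : t ∈ K
    · obtain ⟨c, d, h1, h2, h3, h4⟩ := exists_of_lt_tMaxE (hK ht)
      refine ⟨c, d, fun _ => ⟨h1, h2, h3, ?_⟩⟩
      have hdc : (0:ℝ) < d - c := by linarith
      calc lam * ENNReal.ofReal (d - c)
          ≤ (ENNReal.ofReal ((d - c)⁻¹) * ∫⁻ s in Ioo c d, ENNReal.ofReal (f s)) *
            ENNReal.ofReal (d - c) := mul_le_mul_left h4.le _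
        _ = (ENNReal.ofReal ((d - c)⁻¹) * ENNReal.ofReal (d - c)) *
            ∫⁻ s in Ioo c d, ENNReal.ofReal (f s) := by ring
        _ = ∫⁻ s in Ioo c d, ENNReal.ofReal (f s) := by
            rw [← ENNReal.ofReal_mul (by positivity), inv_mul_cancel₀ hdc.ne',
              ENNReal.ofReal_one, one_mul]
    · exact ⟨0, 1, fun h => absurd h ht⟩
  choose c d hcd using hch
  -- finite subcover
  have hcover : K ⊆ ⋃ t ∈ K, Ioo (c t) (d t) := by
    intro t ht
    exact mem_biUnion ht (hcd t ht).2.2.1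
  obtain ⟨b, hbK, hbfin, hbcover⟩ :=
    hKc.elim_finite_subcover_image (fun t _ => isOpen_Ioo) hcover
  -- Vitali
  obtain ⟨u, hub, hdisj, henl⟩ :=
    Vitali.exists_disjoint_subfamily_covering_enlargement_closedBall b
      (fun t => (c t + d t)/2) (fun t => (d t - c t)/2) ((|R|+1)/2)
      (fun a ha => by
        have h := (hcd a (hbK ha)).1
        have h2 := (hcd a (hbK ha)).2.1
        have : d a - c a ≤ |R| := le_trans h2.le (le_abs_self R)
        linarith)
      4 (by norm_num)
  have hufin : u.Finite := hbfin.subset hub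
  have huK : ∀ a ∈ u, a ∈ K := fun a ha => hbK (hub ha)
  -- interval inside closed ball
  have hIoo_ball : ∀ a : ℝ, Ioo (c a) (d a) ⊆ Metric.closedBall ((c a + d a)/2) ((d a - c a)/2) := by
    intro a s hs
    rw [Metric.mem_closedBall, Real.dist_eq, abs_le]
    exact ⟨by linarith [hs.1, hs.2], by linarith [hs.1, hs.2]⟩
  calc volume K ≤ volume (⋃ t ∈ b, Ioo (c t) (d t)) := measure_mono hbcover
    _ ≤ volume (⋃ t ∈ hufin.toFinset, Metric.closedBall ((c t + d t)/2) (4 * ((d t - c t)/2))) := by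
        refine measure_mono ?_
        refine iUnion₂_subset fun a ha => ?_
        obtain ⟨b', hb'u, hb'⟩ := henl a ha
        refine subset_trans (hIoo_ball a) (subset_trans hb' ?_)
        exact subset_iUnion₂ (s := fun t _ => Metric.closedBall ((c t + d t)/2)
          (4 * ((d t - c t)/2))) b' (hufin.mem_toFinset.2 hb'u)
    _ ≤ ∑ t ∈ hufin.toFinset, volume (Metric.closedBall ((c t + d t)/2) (4 * ((d t - c t)/2))) :=
        measure_biUnion_finset_le _ _
    _ ≤ ∑ t ∈ hufin.toFinset, 4 * (lam⁻¹ * ∫⁻ s in Ioo (c t) (d t), ENNReal.ofReal (f s)) := by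
        refine Finset.sum_le_sum fun a ha => ?_
        have haK : a ∈ K := huK a (hufin.mem_toFinset.1 ha)
        obtain ⟨h1, h2, h3, h4⟩ := hcd a haK
        rw [Real.volume_closedBall]
        have : (2 : ℝ) * (4 * ((d a - c a)/2)) = 4 * (d a - c a) := by ring
        rw [this, ENNReal.ofReal_mul (by norm_num)]
        have h4' : ENNReal.ofReal (d a - c a) ≤ lam⁻¹ * ∫⁻ s in Ioo (c a) (d a), ENNReal.ofReal (f s) := by
          rw [← ENNReal.div_eq_inv_mul]
          exact (ENNReal.le_div_iff_mul_le (Or.inl h0) (Or.inl htop)).2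
            (by rw [mul_comm]; exact h4)
        have : ENNReal.ofReal 4 = (4 : ℝ≥0∞) := by norm_num
        rw [this]
        exact mul_le_mul_right h4' 4
    _ = 4 * lam⁻¹ * ∑ t ∈ hufin.toFinset, ∫⁻ s in Ioo (c t) (d t), ENNReal.ofReal (f s) := by
        rw [Finset.mul_sum]; congr 1; ext t; ring
    _ ≤ 4 * lam⁻¹ * L := by
        refine mul_le_mul_right ?_ _
        rw [← lintegral_biUnion_finset (f := fun s => ENNReal.ofReal (f s))
          (t := fun t => Ioo (c t) (d t)) ?_ (fun t _ => measurableSet_Ioo)]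
        · exact setLIntegral_le_lintegral _ _
        · -- pairwise disjoint
          have : (↑hufin.toFinset : Set ℝ).PairwiseDisjoint
              (fun a => Metric.closedBall ((c a + d a)/2) ((d a - c a)/2)) := by
            rw [hufin.coe_toFinset]; exact hdisj
          exact this.mono fun t => hIoo_ball t


noncomputable def ratTerm (f : ℝ → ℝ) (R t : ℝ) (kk : ℚ × ℚ) : ℝ≥0∞ :=
  if ((kk.1 : ℝ) < (kk.2 : ℝ) ∧ (kk.2 : ℝ) - (kk.1 : ℝ) < R ∧ t ∈ Ioo ((kk.1:ℝ)) ((kk.2:ℝ)))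
  then ENNReal.ofReal (((kk.2:ℝ) - (kk.1:ℝ))⁻¹) *
    ∫⁻ s in Ioo ((kk.1:ℝ)) ((kk.2:ℝ)), ENNReal.ofReal (f s)
  else 0

lemma tMaxE_eq_rat (R : ℝ) (f : ℝ → ℝ) (hf : Measurable f) (t : ℝ) :
    tMaxE R f t = ⨆ kk : ℚ × ℚ, ratTerm f R t kk := by
  apply le_antisymm
  · refine tMaxE_le fun c d h1 h2 h3 => ?_
    refine le_of_forall_lt fun b hb => ?_
    set ν := volume.withDensity (fun s => ENNReal.ofReal (f s)) with hν
    have hνap : ∀ (c' d' : ℝ), ν (Ioo c' d') = ∫⁻ s in Ioo c' d', ENNReal.ofReal (f s) :=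
      fun c' d' => withDensity_apply _ measurableSet_Ioo
    set e := min (t - c) (d - t) with he
    have he0 : 0 < e := lt_min (by linarith [h3.1]) (by linarith [h3.2])
    set S : ℕ → Set ℝ := fun n => Ioo (c + e/(n+2)) (d - e/(n+2)) with hS
    have hmono : Monotone S := by
      intro n m hnm
      have hc : ((n:ℝ) + 2) ≤ (m:ℝ) + 2 := by
        have : (n:ℝ) ≤ (m:ℝ) := by exact_mod_cast hnm
        linarith
      have h1' : e/((m:ℝ)+2) ≤ e/((n:ℝ)+2) :=
        div_le_div_of_nonneg_left he0.le (by positivity) hc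
      exact Ioo_subset_Ioo (by linarith) (by linarith)
    have hunion : ⋃ n, S n = Ioo c d := by
      apply Subset.antisymm
      · refine iUnion_subset fun n => ?_
        have hp : (0:ℝ) < e/((n:ℝ)+2) := by positivity
        exact Ioo_subset_Ioo (by linarith) (by linarith)
      · intro s hs
        have h1' : 0 < s - c := by linarith [hs.1]
        have h2' : 0 < d - s := by linarith [hs.2]
        obtain ⟨n, hn⟩ := exists_nat_gt (e / min (s - c) (d - s))
        refine mem_iUnion.2 ⟨n, ?_⟩
        have hm : 0 < min (s - c) (d - s) := lt_min h1' h2'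
        have : e / ((n:ℝ)+2) < min (s - c) (d - s) := by
          rw [div_lt_iff₀ (by positivity)]
          rw [div_lt_iff₀ hm] at hn
          nlinarith [hm]
        constructor
        · have := min_le_left (s - c) (d - s); linarith
        · have := min_le_right (s - c) (d - s); linarith
    have hmeas : ν (Ioo c d) = ⨆ n, ν (S n) := by
      rw [← hunion]
      exact Directed.measure_iUnion hmono.directed_le
    rw [← hνap, hmeas, ENNReal.mul_iSup] at hb
    obtain ⟨n, hn⟩ := lt_iSup_iff.1 hb
    have hlt : e/((n:ℝ)+2) < e := by
      rw [div_lt_iff₀ (by positivity)]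
      nlinarith [he0, Nat.cast_nonneg (α := ℝ) n]
    have hst : c + e/((n:ℝ)+2) < t := by
      have : e ≤ t - c := min_le_left _ _
      linarith
    have hst2 : t < d - e/((n:ℝ)+2) := by
      have : e ≤ d - t := min_le_right _ _
      linarith
    have hepos : (0:ℝ) < e/((n:ℝ)+2) := by positivity
    obtain ⟨q1, hq1a, hq1b⟩ := exists_rat_btwn (by linarith : c < c + e/((n:ℝ)+2))
    obtain ⟨q2, hq2a, hq2b⟩ := exists_rat_btwn (by linarith : d - e/((n:ℝ)+2) < d)
    refine lt_of_lt_of_le ?_ (le_iSup _ (q1, q2))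
    have hq12 : (q1:ℝ) < q2 := by linarith
    have hcond : ((q1:ℝ) < (q2:ℝ) ∧ (q2:ℝ) - (q1:ℝ) < R ∧ t ∈ Ioo ((q1:ℝ)) ((q2:ℝ))) :=
      ⟨hq12, by linarith, by constructor <;> linarith⟩
    rw [ratTerm, if_pos hcond]
    refine lt_of_lt_of_le hn ?_
    rw [← hνap]
    refine mul_le_mul' (ENNReal.ofReal_le_ofReal ?_) (measure_mono ?_)
    · apply inv_anti₀ (by linarith) (by linarith)
    · exact Ioo_subset_Ioo (by linarith) (by linarith)
  · refine iSup_le fun kk => ?_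
    rw [ratTerm]
    split_ifs with h
    · exact le_tMaxE h.1 h.2.1 h.2.2
    · exact zero_le

lemma measurable_tMaxE_param {m : ℕ} (κ : ℝ) (f : (Fin m → ℝ) × ℝ × ℝ → ℝ)
    (hf : Measurable f) :
    Measurable fun q : (Fin m → ℝ) × ℝ × ℝ =>
      tMaxE (κ * q.2.1 ^ 2) (fun s => f (q.1, q.2.1, s)) q.2.2 := by
  have hsec : ∀ q : (Fin m → ℝ) × ℝ × ℝ, Measurable fun s => f (q.1, q.2.1, s) := by
    intro q
    exact hf.comp (measurable_const.prodMk (measurable_const.prodMk measurable_id))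
  have heq : (fun q : (Fin m → ℝ) × ℝ × ℝ =>
      tMaxE (κ * q.2.1 ^ 2) (fun s => f (q.1, q.2.1, s)) q.2.2) =
      fun q => ⨆ kk : ℚ × ℚ, ratTerm (fun s => f (q.1, q.2.1, s)) (κ * q.2.1 ^ 2) q.2.2 kk :=
    funext fun q => tMaxE_eq_rat _ _ (hsec q) _
  rw [heq]
  refine Measurable.iSup fun kk => ?_
  have hval : Measurable fun q : (Fin m → ℝ) × ℝ × ℝ =>
      ENNReal.ofReal (((kk.2:ℝ) - (kk.1:ℝ))⁻¹) *
        ∫⁻ s in Ioo ((kk.1:ℝ)) ((kk.2:ℝ)), ENNReal.ofReal (f (q.1, q.2.1, s)) := by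
    refine measurable_const.mul ?_
    have hint : Measurable fun z : ((Fin m → ℝ) × ℝ × ℝ) × ℝ =>
        ENNReal.ofReal (f (z.1.1, z.1.2.1, z.2)) :=
      ENNReal.measurable_ofReal.comp (hf.comp
        ((measurable_fst.fst).prodMk ((measurable_fst.snd.fst).prodMk measurable_snd)))
    exact hint.lintegral_prod_right' (ν := volume.restrict (Ioo ((kk.1:ℝ)) ((kk.2:ℝ))))
  have hcondmeas : MeasurableSet {q : (Fin m → ℝ) × ℝ × ℝ |
      (kk.1 : ℝ) < (kk.2 : ℝ) ∧ (kk.2 : ℝ) - (kk.1 : ℝ) < κ * q.2.1 ^ 2 ∧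
        q.2.2 ∈ Ioo ((kk.1:ℝ)) ((kk.2:ℝ))} := by
    have h1 : MeasurableSet {q : (Fin m → ℝ) × ℝ × ℝ | (kk.1 : ℝ) < (kk.2 : ℝ)} := by
      by_cases h : (kk.1 : ℝ) < (kk.2 : ℝ) <;> simp [h]
    have h2 : MeasurableSet {q : (Fin m → ℝ) × ℝ × ℝ |
        (kk.2 : ℝ) - (kk.1 : ℝ) < κ * q.2.1 ^ 2} :=
      measurableSet_lt measurable_const
        (measurable_const.mul ((measurable_fst.comp measurable_snd).pow_const 2))
    have h3 : MeasurableSet {q : (Fin m → ℝ) × ℝ × ℝ | q.2.2 ∈ Ioo ((kk.1:ℝ)) ((kk.2:ℝ))} :=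
      (measurable_snd.comp measurable_snd) measurableSet_Ioo
    have : {q : (Fin m → ℝ) × ℝ × ℝ |
        (kk.1 : ℝ) < (kk.2 : ℝ) ∧ (kk.2 : ℝ) - (kk.1 : ℝ) < κ * q.2.1 ^ 2 ∧
          q.2.2 ∈ Ioo ((kk.1:ℝ)) ((kk.2:ℝ))} =
        {q : (Fin m → ℝ) × ℝ × ℝ | (kk.1 : ℝ) < (kk.2 : ℝ)} ∩
          ({q | (kk.2 : ℝ) - (kk.1 : ℝ) < κ * q.2.1 ^ 2} ∩
            {q | q.2.2 ∈ Ioo ((kk.1:ℝ)) ((kk.2:ℝ))}) := by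
      ext q; simp [and_assoc]
    rw [this]
    exact h1.inter (h2.inter h3)
  exact Measurable.ite hcondmeas hval measurable_const


/-- Localization: inside a time window, the maximal function at scale `R ≤ K` only
sees the function on the `K`-enlarged window. -/
lemma tMaxE_indicator {R K : ℝ} (f : ℝ → ℝ) {a b t : ℝ} (ht : t ∈ Ioo a b) (hRK : R ≤ K) :
    tMaxE R f t = tMaxE R ((Ioo (a - K) (b + K)).indicator f) t := by
  have key : ∀ c d, c < d → d - c < R → t ∈ Ioo c d →
      (∫⁻ s in Ioo c d, ENNReal.ofReal (f s)) =
        ∫⁻ s in Ioo c d, ENNReal.ofReal ((Ioo (a - K) (b + K)).indicator f s) := by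
    intro c d h1 h2 h3
    refine setLIntegral_congr_fun_ae measurableSet_Ioo (Filter.Eventually.of_forall ?_)
    intro s hs
    rw [indicator_of_mem]
    constructor
    · have := ht.1; have := h3.1; have := h3.2; have := hs.1; linarith
    · have := ht.2; have := h3.1; have := h3.2; have := hs.2; linarith
  apply le_antisymm
  · refine tMaxE_le fun c d h1 h2 h3 => ?_
    rw [key c d h1 h2 h3]
    exact le_tMaxE h1 h2 h3
  · refine tMaxE_le fun c d h1 h2 h3 => ?_
    rw [← key c d h1 h2 h3]
    exact le_tMaxE h1 h2 h3

/-- Splitting at level `lam`. -/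
lemma tMaxE_split {R : ℝ} (f : ℝ → ℝ) {t lam : ℝ} (hlam : 0 < lam)
    (h : ENNReal.ofReal lam < tMaxE R f t) :
    ENNReal.ofReal (lam / 2) < tMaxE R (fun s => if lam / 2 < f s then f s else 0) t := by
  have hbound : tMaxE R f t ≤ ENNReal.ofReal (lam / 2) +
      tMaxE R (fun s => if lam / 2 < f s then f s else 0) t := by
    refine tMaxE_le fun c d h1 h2 h3 => ?_
    have hdc : (0:ℝ) < d - c := by linarith
    have hpt : ∀ s, ENNReal.ofReal (f s) ≤ ENNReal.ofReal (lam / 2) +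
        ENNReal.ofReal ((fun s => if lam / 2 < f s then f s else 0) s) := by
      intro s
      by_cases hc : lam / 2 < f s
      · simp only [hc, if_pos]
        exact le_add_self
      · simp only [hc, if_neg, if_false]
        push_neg at hc
        calc ENNReal.ofReal (f s) ≤ ENNReal.ofReal (lam/2) := ENNReal.ofReal_le_ofReal hc
          _ ≤ _ := le_self_add.trans (by rw [ENNReal.ofReal_zero, add_zero])
    calc ENNReal.ofReal ((d - c)⁻¹) * ∫⁻ s in Ioo c d, ENNReal.ofReal (f s)
        ≤ ENNReal.ofReal ((d - c)⁻¹) * ∫⁻ s in Ioo c d,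
          (ENNReal.ofReal (lam / 2) +
            ENNReal.ofReal ((fun s => if lam / 2 < f s then f s else 0) s)) :=
          mul_le_mul_right (lintegral_mono hpt) _
      _ = ENNReal.ofReal ((d - c)⁻¹) * (ENNReal.ofReal (lam / 2) * volume (Ioo c d) +
            ∫⁻ s in Ioo c d, ENNReal.ofReal ((fun s => if lam / 2 < f s then f s else 0) s)) := by
          rw [lintegral_add_left measurable_const, setLIntegral_const]
      _ = ENNReal.ofReal ((d - c)⁻¹) * (ENNReal.ofReal (lam / 2) * volume (Ioo c d)) +
          ENNReal.ofReal ((d - c)⁻¹) *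
            ∫⁻ s in Ioo c d, ENNReal.ofReal ((fun s => if lam / 2 < f s then f s else 0) s) :=
          mul_add _ _ _
      _ ≤ ENNReal.ofReal (lam / 2) +
          tMaxE R (fun s => if lam / 2 < f s then f s else 0) t := by
          refine add_le_add ?_ (le_tMaxE h1 h2 h3)
          rw [Real.volume_Ioo, ← mul_assoc, mul_comm (ENNReal.ofReal ((d-c)⁻¹)),
            mul_assoc, ← ENNReal.ofReal_mul (by positivity), inv_mul_cancel₀ hdc.ne',
            ENNReal.ofReal_one, mul_one]
  have heq : ENNReal.ofReal lam = ENNReal.ofReal (lam/2) + ENNReal.ofReal (lam/2) := by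
    rw [← ENNReal.ofReal_add (by linarith) (by linarith)]; norm_num
  have := lt_of_lt_of_le h hbound
  rw [heq] at this
  exact (ENNReal.add_lt_add_iff_left ENNReal.ofReal_ne_top).1 this


/-- The `L^p` constant. -/
noncomputable def Cp (p : ℝ) : ℝ := 8 * p * (p - 1)⁻¹ * 2 ^ (p - 1)

lemma Cp_pos {p : ℝ} (hp : 1 < p) : 0 < Cp p := by
  have h1 : (0:ℝ) < p := by linarith
  have h2 : (0:ℝ) < (p-1)⁻¹ := by rw [inv_pos]; linarith
  have h3 : (0:ℝ) < (2:ℝ) ^ (p-1) := Real.rpow_pos_of_pos (by norm_num) _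
  unfold Cp; positivity

lemma lp_bound (p : ℝ) (hp : 1 < p) (R : ℝ) (f : ℝ → ℝ) (hf : Measurable f)
    (hL1 : (∫⁻ s, ENNReal.ofReal (f s)) ≠ ∞) :
    ∫⁻ t, tMaxE R f t ^ p ≤ ENNReal.ofReal (Cp p) * ∫⁻ s, ENNReal.ofReal (f s) ^ p := by
  set M := tMaxE R f with hMdef
  have hM : Measurable M := measurable_tMaxE R f
  set L := ∫⁻ s, ENNReal.ofReal (f s) with hLdef
  -- Step 1: M is a.e. finite
  have hMfin : volume {t | M t = ∞} = 0 := by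
    by_contra hne
    have hbound : ∀ n : ℕ, volume {t | M t = ∞} ≤ 4 * ((n : ℝ≥0∞) + 1)⁻¹ * L := by
      intro n
      refine le_trans (measure_mono ?_) (weak_type R f ((n:ℝ≥0∞)+1)
        (by simp) (by simp [ENNReal.add_eq_top]))
      intro t ht
      rw [mem_setOf_eq] at ht ⊢
      rw [show tMaxE R f t = M t from rfl, ht]
      exact lt_top_iff_ne_top.2 (by simp [ENNReal.add_eq_top])
    set v := volume {t | M t = ∞} with hv
    rcases eq_or_ne L 0 with hL0 | hL0
    · have := hbound 0
      rw [hL0, mul_zero] at this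
      exact hne (le_antisymm this zero_le)
    · have hdiv : v / (4 * L) ≠ 0 := by
        rw [ENNReal.div_ne_zero]
        exact ⟨hne, ENNReal.mul_ne_top (by norm_num) hL1⟩
      obtain ⟨n, hn⟩ := ENNReal.exists_inv_nat_lt hdiv
      have hmono : ((n:ℝ≥0∞) + 1)⁻¹ ≤ ((n:ℝ≥0∞))⁻¹ :=
        ENNReal.inv_le_inv.2 le_self_add
      have h1 : v ≤ 4 * ((n:ℝ≥0∞))⁻¹ * L := le_trans (hbound n)
        (mul_le_mul_left (mul_le_mul_right hmono 4) L)
      have h2 : 4 * ((n:ℝ≥0∞))⁻¹ * L < 4 * (v / (4 * L)) * L := by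
        have h4L0 : (4 : ℝ≥0∞) * L ≠ 0 := by
          simp [hL0]
        have h4Lt : (4 : ℝ≥0∞) * L ≠ ∞ := ENNReal.mul_ne_top (by norm_num) hL1
        have := (ENNReal.mul_lt_mul_iff_right h4L0 h4Lt).2 hn
        calc 4 * ((n:ℝ≥0∞))⁻¹ * L = 4 * L * ((n:ℝ≥0∞))⁻¹ := by ring
          _ < 4 * L * (v / (4 * L)) := this
          _ = 4 * (v / (4 * L)) * L := by ring
      have h3 : 4 * (v / (4 * L)) * L = v := by
        calc 4 * (v / (4 * L)) * L = v / (4 * L) * (4 * L) := by ring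
          _ = v := ENNReal.div_mul_cancel (by simp [hL0]) (ENNReal.mul_ne_top (by norm_num) hL1)
      rw [h3] at h2
      exact absurd (lt_of_le_of_lt h1 h2) (lt_irrefl v)
  have hae : ∀ᵐ t, M t ≠ ∞ := by
    rw [ae_iff]
    simpa using hMfin
  -- Step 2: rewrite via toReal
  have hstep2 : ∫⁻ t, M t ^ p = ∫⁻ t, ENNReal.ofReal ((M t).toReal ^ p) := by
    refine lintegral_congr_ae ?_
    filter_upwards [hae] with t ht
    rw [← ENNReal.ofReal_rpow_of_nonneg ENNReal.toReal_nonneg (by linarith),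
      ENNReal.ofReal_toReal ht]
  -- Step 3: layer cake
  have hint : ∀ a : ℝ, 0 ≤ a → (∫ lam in (0:ℝ)..a, p * lam ^ (p - 1)) = a ^ p := by
    intro a _
    rw [intervalIntegral.integral_const_mul, integral_rpow (Or.inl (by linarith))]
    have hpe : p - 1 + 1 = p := by ring
    rw [hpe, Real.zero_rpow (by linarith : p ≠ 0)]
    field_simp
    rw [sub_zero]
  have hlc : ∫⁻ t, ENNReal.ofReal ((M t).toReal ^ p) =
      ∫⁻ lam in Ioi (0:ℝ), volume {t | lam < (M t).toReal} * ENNReal.ofReal (p * lam ^ (p-1)) := by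
    have := lintegral_comp_eq_lintegral_meas_lt_mul volume
      (f := fun t => (M t).toReal) (g := fun lam => p * lam ^ (p - 1))
      (Filter.Eventually.of_forall fun t => ENNReal.toReal_nonneg)
      (hM.ennreal_toReal).aemeasurable
      (fun t _ => (intervalIntegral.intervalIntegrable_rpow' (by linarith)).const_mul p)
      ((ae_restrict_iff' measurableSet_Ioi).2 (Filter.Eventually.of_forall fun lam hlam => by
        have : (0:ℝ) < lam := hlam
        positivity))
    rw [← this]
    refine lintegral_congr fun t => ?_
    rw [hint _ ENNReal.toReal_nonneg]
  -- the joint kernel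
  set F : ℝ × ℝ → ℝ≥0∞ := fun z =>
    ENNReal.ofReal (8 * p * z.1 ^ (p - 2)) *
      (ENNReal.ofReal (f z.2) * ({w : ℝ × ℝ | w.1 < 2 * f w.2}.indicator (fun _ => (1:ℝ≥0∞)) z))
    with hFdef
  have hFmeas : Measurable F := by
    refine Measurable.mul ?_ (Measurable.mul ?_ ?_)
    · refine ENNReal.measurable_ofReal.comp ?_
      exact (measurable_const.mul ((measurable_id.pow_const (p-2)).comp measurable_fst))
    · exact ENNReal.measurable_ofReal.comp (hf.comp measurable_snd)
    · exact measurable_const.indicator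
        (measurableSet_lt measurable_fst (measurable_const.mul (hf.comp measurable_snd)))
  -- Step 4: pointwise bound of the tail term
  have hstep4 : ∀ lam : ℝ, lam ∈ Ioi (0:ℝ) →
      volume {t | lam < (M t).toReal} * ENNReal.ofReal (p * lam ^ (p-1)) ≤
        ∫⁻ s, F (lam, s) := by
    intro lam hlam
    have hlam0 : (0:ℝ) < lam := hlam
    set flam : ℝ → ℝ := fun s => if lam / 2 < f s then f s else 0 with hflam
    have hsub : {t | lam < (M t).toReal} ⊆
        {t | ENNReal.ofReal (lam/2) < tMaxE R flam t} := by
      intro t ht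
      rw [mem_setOf_eq] at ht ⊢
      rcases eq_or_ne (M t) ∞ with hMt | hMt
      · rw [hMt] at ht; simp at ht; linarith
      · exact tMaxE_split f hlam0 ((ENNReal.ofReal_lt_iff_lt_toReal hlam0.le hMt).2 ht)
    have hwk := weak_type R flam (ENNReal.ofReal (lam/2))
      ((ENNReal.ofReal_pos.2 (by linarith)).ne') ENNReal.ofReal_ne_top
    have hconst : (4 : ℝ≥0∞) * (ENNReal.ofReal (lam/2))⁻¹ * ENNReal.ofReal (p * lam ^ (p-1)) =
        ENNReal.ofReal (8 * p * lam ^ (p - 2)) := by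
      rw [← ENNReal.ofReal_inv_of_pos (by linarith)]
      have h4 : (4 : ℝ≥0∞) = ENNReal.ofReal 4 := by norm_num
      rw [h4, ← ENNReal.ofReal_mul (by norm_num), ← ENNReal.ofReal_mul (by positivity)]
      congr 1
      have hrw : lam ^ (p - 2) = lam ^ (p-1) * lam⁻¹ := by
        rw [← Real.rpow_neg_one lam, ← Real.rpow_add hlam0]
        congr 1
        ring
      rw [hrw]
      field_simp
      ring
    have hflam_int : ∀ s, ENNReal.ofReal (flam s) =
        ENNReal.ofReal (f s) * ({w : ℝ × ℝ | w.1 < 2 * f w.2}.indicator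
          (fun _ => (1:ℝ≥0∞)) (lam, s)) := by
      intro s
      by_cases hc : lam / 2 < f s
      · have hmem : (lam, s) ∈ {w : ℝ × ℝ | w.1 < 2 * f w.2} := by
          rw [mem_setOf_eq]; simp only; linarith
        simp only [hflam, if_pos hc, indicator_of_mem hmem, mul_one]
      · have hmem : (lam, s) ∉ {w : ℝ × ℝ | w.1 < 2 * f w.2} := by
          rw [mem_setOf_eq]; push_neg at hc ⊢; simp only; linarith
        simp only [hflam, if_neg hc, indicator_of_notMem hmem, mul_zero, ENNReal.ofReal_zero]
    calc volume {t | lam < (M t).toReal} * ENNReal.ofReal (p * lam ^ (p-1))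
        ≤ (4 * (ENNReal.ofReal (lam/2))⁻¹ * ∫⁻ s, ENNReal.ofReal (flam s)) *
            ENNReal.ofReal (p * lam ^ (p-1)) :=
          mul_le_mul_left (le_trans (measure_mono hsub) hwk) _
      _ = ENNReal.ofReal (8 * p * lam ^ (p - 2)) * ∫⁻ s, ENNReal.ofReal (flam s) := by
          rw [← hconst]; ring
      _ = ∫⁻ s, F (lam, s) := by
          rw [← lintegral_const_mul' _ _ ENNReal.ofReal_ne_top]
          refine lintegral_congr fun s => ?_
          rw [hFdef, hflam_int s]
  -- Step 5: inner integral bound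
  have hstep5 : ∀ s : ℝ, (∫⁻ lam in Ioi (0:ℝ), F (lam, s)) ≤
      ENNReal.ofReal (Cp p) * ENNReal.ofReal (f s) ^ p := by
    intro s
    by_cases hfs : 0 < f s
    · -- dirac layer cake
      have hkey := lintegral_comp_eq_lintegral_meas_lt_mul (Measure.dirac ())
        (f := fun _ : Unit => 2 * f s) (g := fun lam => lam ^ (p - 2))
        (Filter.Eventually.of_forall fun _ => by simp only [Pi.zero_apply]; linarith)
        aemeasurable_const
        (fun t _ => intervalIntegral.intervalIntegrable_rpow' (by linarith))
        ((ae_restrict_iff' measurableSet_Ioi).2 (Filter.Eventually.of_forall fun lam hlam => by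
          have : (0:ℝ) < lam := hlam
          positivity))
      rw [lintegral_dirac] at hkey
      have hval : (∫ lam in (0:ℝ)..(2 * f s), lam ^ (p-2)) = (2 * f s) ^ (p-1) / (p-1) := by
        rw [integral_rpow (Or.inl (by linarith))]
        have hpe : p - 2 + 1 = p - 1 := by ring
        rw [hpe, Real.zero_rpow (by linarith : p - 1 ≠ 0), sub_zero]
      rw [hval] at hkey
      have hdirac : ∀ lam : ℝ, lam ∈ Ioi (0:ℝ) → F (lam, s) =
          (ENNReal.ofReal (8 * p) * ENNReal.ofReal (f s)) *
            (Measure.dirac () {a : Unit | lam < 2 * f s} * ENNReal.ofReal (lam ^ (p-2))) := by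
        intro lam hlam
        have hlam0 : (0:ℝ) < lam := hlam
        by_cases hc : lam < 2 * f s
        · have h1 : {a : Unit | lam < 2 * f s} = (univ : Set Unit) := eq_univ_of_forall fun _ => hc
          have hmem : (lam, s) ∈ {w : ℝ × ℝ | w.1 < 2 * f w.2} := hc
          rw [hFdef]
          simp only [h1, measure_univ, one_mul, indicator_of_mem hmem, mul_one]
          rw [show (8:ℝ) * p * lam ^ (p-2) = (8*p) * lam ^ (p-2) by ring,
            ENNReal.ofReal_mul (by positivity : (0:ℝ) ≤ 8 * p)]
          ring
        · have h1 : {a : Unit | lam < 2 * f s} = (∅ : Set Unit) := by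
            ext a; simp [hc]
          have hmem : (lam, s) ∉ {w : ℝ × ℝ | w.1 < 2 * f w.2} := hc
          rw [hFdef]
          simp only [h1, measure_empty, zero_mul, mul_zero, indicator_of_notMem hmem]
      calc ∫⁻ lam in Ioi (0:ℝ), F (lam, s)
          = ∫⁻ lam in Ioi (0:ℝ), (ENNReal.ofReal (8 * p) * ENNReal.ofReal (f s)) *
              (Measure.dirac () {a : Unit | lam < 2 * f s} * ENNReal.ofReal (lam ^ (p-2))) :=
            setLIntegral_congr_fun_ae measurableSet_Ioi
              (Filter.Eventually.of_forall fun lam hlam => hdirac lam hlam)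
        _ = (ENNReal.ofReal (8 * p) * ENNReal.ofReal (f s)) *
              ∫⁻ lam in Ioi (0:ℝ), Measure.dirac () {a : Unit | lam < 2 * f s} *
                ENNReal.ofReal (lam ^ (p-2)) :=
            lintegral_const_mul' _ _ (ENNReal.mul_ne_top ENNReal.ofReal_ne_top ENNReal.ofReal_ne_top)
        _ = (ENNReal.ofReal (8 * p) * ENNReal.ofReal (f s)) *
              ENNReal.ofReal ((2 * f s) ^ (p-1) / (p-1)) := by rw [← hkey]
        _ = ENNReal.ofReal (Cp p) * ENNReal.ofReal (f s) ^ p := by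
            rw [ENNReal.ofReal_rpow_of_nonneg hfs.le (by linarith : (0:ℝ) ≤ p)]
            rw [← ENNReal.ofReal_mul (by positivity : (0:ℝ) ≤ 8 * p),
              ← ENNReal.ofReal_mul (by positivity : (0:ℝ) ≤ 8 * p * f s),
              ← ENNReal.ofReal_mul (Cp_pos hp).le]
            congr 1
            have h2fs : (2 * f s) ^ (p-1) = 2^(p-1) * (f s)^(p-1) :=
              Real.mul_rpow (by norm_num) hfs.le
            have hfsp : (f s) ^ p = f s * (f s) ^ (p-1) := by
              nth_rewrite 1 [show p = 1 + (p-1) by ring]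
              rw [Real.rpow_add hfs, Real.rpow_one]
            have hp1 : p - 1 ≠ 0 := by linarith
            rw [h2fs, hfsp, Cp]
            field_simp
        _ ≤ ENNReal.ofReal (Cp p) * ENNReal.ofReal (f s) ^ p := le_rfl
    · -- f s ≤ 0 : the integrand vanishes on Ioi 0
      push_neg at hfs
      have hzero : ∀ lam : ℝ, lam ∈ Ioi (0:ℝ) → F (lam, s) = 0 := by
        intro lam hlam
        have hlam0 : (0:ℝ) < lam := hlam
        have hmem : (lam, s) ∉ {w : ℝ × ℝ | w.1 < 2 * f w.2} := by
          rw [mem_setOf_eq]; simp only; push_neg; linarith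
        rw [hFdef]
        simp [indicator_of_notMem hmem]
      rw [setLIntegral_congr_fun_ae measurableSet_Ioi
        (Filter.Eventually.of_forall fun lam hlam => hzero lam hlam)]
      simp
  -- assemble
  calc ∫⁻ t, M t ^ p
      = ∫⁻ lam in Ioi (0:ℝ), volume {t | lam < (M t).toReal} *
          ENNReal.ofReal (p * lam ^ (p-1)) := by rw [hstep2, hlc]
    _ ≤ ∫⁻ lam in Ioi (0:ℝ), ∫⁻ s, F (lam, s) := by
        refine setLIntegral_mono (Measurable.lintegral_prod_right' hFmeas) hstep4
    _ = ∫⁻ s, ∫⁻ lam in Ioi (0:ℝ), F (lam, s) := by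
        exact lintegral_lintegral_swap (hFmeas.aemeasurable)
    _ ≤ ∫⁻ s, ENNReal.ofReal (Cp p) * ENNReal.ofReal (f s) ^ p := lintegral_mono hstep5
    _ = ENNReal.ofReal (Cp p) * ∫⁻ s, ENNReal.ofReal (f s) ^ p :=
        lintegral_const_mul' _ _ ENNReal.ofReal_ne_top


lemma slice_bound (p : ℝ) (hp : 1 < p) {κ r t₀ xn : ℝ} (hκ : 0 < κ) (hr : 0 < r)
    (hxn : 0 < xn) (hxnr : xn < r) (f : ℝ → ℝ) (hf : Measurable f) :
    ∫⁻ t in Ioo (t₀ - r^2) (t₀ + r^2), tMaxE (κ * xn^2) f t ^ p ≤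
      ENNReal.ofReal (Cp p) *
        ∫⁻ s in Ioo (t₀ - (1+κ)*r^2) (t₀ + (1+κ)*r^2), ENNReal.ofReal (f s) ^ p := by
  set E := Ioo (t₀ - (1+κ)*r^2) (t₀ + (1+κ)*r^2) with hE
  have hEm : MeasurableSet E := measurableSet_Ioo
  set f' := E.indicator f with hf'
  have hf'm : Measurable f' := hf.indicator hEm
  have hloc : ∫⁻ t in Ioo (t₀ - r^2) (t₀ + r^2), tMaxE (κ * xn^2) f t ^ p
      = ∫⁻ t in Ioo (t₀ - r^2) (t₀ + r^2), tMaxE (κ * xn^2) f' t ^ p := by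
    refine setLIntegral_congr_fun_ae measurableSet_Ioo
      (Filter.Eventually.of_forall fun t ht => ?_)
    congr 1
    have hEeq : E = Ioo ((t₀ - r^2) - κ*r^2) ((t₀ + r^2) + κ*r^2) := by
      rw [hE]; congr 1 <;> ring
    rw [hf', hEeq]
    have hx2 : xn^2 ≤ r^2 := by nlinarith
    exact tMaxE_indicator f ht (mul_le_mul_of_nonneg_left hx2 hκ.le)
  have hpow : ∀ s, ENNReal.ofReal (f' s) ^ p
      = E.indicator (fun s => ENNReal.ofReal (f s) ^ p) s := by
    intro s
    by_cases hs : s ∈ E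
    · rw [hf', indicator_of_mem hs, indicator_of_mem hs]
    · rw [hf', indicator_of_notMem hs, indicator_of_notMem hs, ENNReal.ofReal_zero,
        ENNReal.zero_rpow_of_pos (by linarith)]
  have hrhs : ∫⁻ s, ENNReal.ofReal (f' s) ^ p = ∫⁻ s in E, ENNReal.ofReal (f s) ^ p := by
    rw [lintegral_congr hpow, lintegral_indicator hEm]
  by_cases hfin : (∫⁻ s in E, ENNReal.ofReal (f s) ^ p) = ∞
  · rw [hfin, ENNReal.mul_top (ENNReal.ofReal_pos.2 (Cp_pos hp)).ne']
    exact le_top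
  · have hind0 : ∀ s, ENNReal.ofReal (f' s)
        = E.indicator (fun s => ENNReal.ofReal (f s)) s := by
      intro s
      by_cases hs : s ∈ E
      · rw [hf', indicator_of_mem hs, indicator_of_mem hs]
      · rw [hf', indicator_of_notMem hs, indicator_of_notMem hs, ENNReal.ofReal_zero]
    have hL1 : (∫⁻ s, ENNReal.ofReal (f' s)) ≠ ∞ := by
      rw [lintegral_congr hind0, lintegral_indicator hEm]
      -- Hölder
      have hconj : p.HolderConjugate (p/(p-1)) := Real.HolderConjugate.conjExponent hp
      have hH := ENNReal.lintegral_mul_le_Lp_mul_Lq (volume.restrict E) hconj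
        (f := fun s => ENNReal.ofReal (f s)) (g := fun _ => 1)
        (ENNReal.measurable_ofReal.comp hf).aemeasurable aemeasurable_const
      simp only [Pi.mul_apply, mul_one] at hH
      refine ne_top_of_le_ne_top ?_ hH
      have h1 : (∫⁻ s in E, ENNReal.ofReal (f s) ^ p) ^ (1/p) ≠ ∞ :=
        (ENNReal.rpow_lt_top_of_nonneg (by positivity) hfin).ne
      have h2 : (∫⁻ _ in E, (1:ℝ≥0∞) ^ (p/(p-1))) ^ (1/(p/(p-1))) ≠ ∞ := by
        simp only [ENNReal.one_rpow]
        rw [setLIntegral_const]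
        have hq0 : (0:ℝ) ≤ 1/(p/(p-1)) :=
          (div_pos one_pos (div_pos (by linarith) (by linarith))).le
        refine (ENNReal.rpow_lt_top_of_nonneg hq0 ?_).ne
        rw [one_mul, hE]
        exact (measure_Ioo_lt_top).ne
      exact ENNReal.mul_ne_top h1 h2
    calc ∫⁻ t in Ioo (t₀ - r^2) (t₀ + r^2), tMaxE (κ * xn^2) f t ^ p
        = ∫⁻ t in Ioo (t₀ - r^2) (t₀ + r^2), tMaxE (κ * xn^2) f' t ^ p := hloc
      _ ≤ ∫⁻ t, tMaxE (κ * xn^2) f' t ^ p := setLIntegral_le_lintegral _ _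
      _ ≤ ENNReal.ofReal (Cp p) * ∫⁻ s, ENNReal.ofReal (f' s) ^ p :=
          lp_bound p hp _ f' hf'm hL1
      _ = ENNReal.ofReal (Cp p) * ∫⁻ s in E, ENNReal.ofReal (f s) ^ p := by rw [hrhs]


end Stmt5Aux

open Stmt5Aux

/-- if `dν = f^p g dX dt` is a Carleson measure with norm at most `M`, then
`dν̃ = M_{κ xₙ²}(f(X,·))(t)^p g(X) dX dt` is a Carleson measure with norm at most
`C max{1,κ} M`, where `C = C(n,p)`. -/
theorem stmt5 (n : ℕ) (hn : 2 ≤ n) (p : ℝ) (hp : 1 < p) :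
    ∃ C : ℝ, 0 < C ∧
      ∀ (κ : ℝ), 0 < κ →
      ∀ (f : (Fin (n - 1) → ℝ) × ℝ × ℝ → ℝ) (g : (Fin (n - 1) → ℝ) × ℝ → ℝ),
        Measurable f → Measurable g → (∀ q, 0 ≤ f q) → (∀ X, 0 ≤ g X) →
      ∀ (M : ℝ), 0 ≤ M →
        (∀ (x₀ : Fin (n - 1) → ℝ) (t₀ r : ℝ), 0 < r →
          ∫⁻ q in carlesonBox (n - 1) x₀ t₀ r,
              ENNReal.ofReal (f q ^ p) * ENNReal.ofReal (g (q.1, q.2.1)) ≤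
            ENNReal.ofReal (M * r ^ (n + 1))) →
        ∀ (x₀ : Fin (n - 1) → ℝ) (t₀ r : ℝ), 0 < r →
          ∫⁻ q in carlesonBox (n - 1) x₀ t₀ r,
              (tMaxE (κ * q.2.1 ^ 2) (fun s => f (q.1, q.2.1, s)) q.2.2) ^ p *
                ENNReal.ofReal (g (q.1, q.2.1)) ≤
            ENNReal.ofReal (C * max 1 κ * M * r ^ (n + 1)) := by
  refine ⟨Cp p * 5, by have := Cp_pos hp; positivity, ?_⟩
  intro κ hκ f g hf hg hf0 hg0 M hM hcarl x₀ t₀ r hr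
  -- box as product set
  set A : Set (Fin (n-1) → ℝ) := univ.pi fun i => Ioo (x₀ i - r) (x₀ i + r) with hA
  have hAm : MeasurableSet A := MeasurableSet.univ_pi fun i => measurableSet_Ioo
  have boxEq : ∀ c : ℝ, carlesonBox (n-1) x₀ c r =
      A ×ˢ ((Ioo (0:ℝ) r) ×ˢ (Ioo (c - r^2) (c + r^2))) := by
    intro c
    ext q
    simp only [carlesonBox, mem_setOf_eq, mem_prod, hA, mem_pi, mem_univ, true_implies,
      mem_Ioo]
    constructor
    · rintro ⟨h1, h2, h3, h4⟩
      rw [abs_lt] at h4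
      refine ⟨fun i => ?_, ⟨h2, h3⟩, ?_⟩
      · have hi := h1 i
        rw [abs_lt] at hi
        exact ⟨by linarith [hi.1], by linarith [hi.2]⟩
      · exact ⟨by linarith [h4.1], by linarith [h4.2]⟩
    · rintro ⟨h1, ⟨h2, h3⟩, h4⟩
      refine ⟨fun i => ?_, h2, h3, ?_⟩
      · rw [abs_lt]
        have hi := h1 i
        exact ⟨by linarith [hi.1], by linarith [hi.2]⟩
      · rw [abs_lt]
        exact ⟨by linarith [h4.1], by linarith [h4.2]⟩
  -- integrands
  set G : (Fin (n-1) → ℝ) × ℝ × ℝ → ℝ≥0∞ := fun q =>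
    tMaxE (κ * q.2.1 ^ 2) (fun s => f (q.1, q.2.1, s)) q.2.2 ^ p *
      ENNReal.ofReal (g (q.1, q.2.1)) with hG
  set H : (Fin (n-1) → ℝ) × ℝ × ℝ → ℝ≥0∞ := fun q =>
    ENNReal.ofReal (f q ^ p) * ENNReal.ofReal (g (q.1, q.2.1)) with hH
  have hGm : Measurable G :=
    ((measurable_tMaxE_param κ f hf).pow_const p).mul
      (ENNReal.measurable_ofReal.comp (hg.comp
        (measurable_fst.prodMk (measurable_fst.comp measurable_snd))))
  have hHm : Measurable H :=
    (ENNReal.measurable_ofReal.comp (hf.pow_const p)).mul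
      (ENNReal.measurable_ofReal.comp (hg.comp
        (measurable_fst.prodMk (measurable_fst.comp measurable_snd))))
  -- iterated integrals
  have hiter : ∀ (S T : Set ℝ), MeasurableSet S → MeasurableSet T →
      ∀ (G' : (Fin (n-1) → ℝ) × ℝ × ℝ → ℝ≥0∞), Measurable G' →
      ∫⁻ q in A ×ˢ (S ×ˢ T), G' q = ∫⁻ x in A, ∫⁻ y in S, ∫⁻ t in T, G' (x, y, t) := by
    intro S T hS hT G' hG'
    calc ∫⁻ q in A ×ˢ (S ×ˢ T), G' q
        = ∫⁻ q, G' q ∂((volume.restrict A).prod (volume.restrict (S ×ˢ T))) := by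
          rw [Measure.prod_restrict, ← Measure.volume_eq_prod]
      _ = ∫⁻ x in A, ∫⁻ y in S ×ˢ T, G' (x, y) := lintegral_prod _ hG'.aemeasurable
      _ = ∫⁻ x in A, ∫⁻ y in S, ∫⁻ t in T, G' (x, y, t) := by
          refine lintegral_congr fun x => ?_
          calc ∫⁻ y in S ×ˢ T, G' (x, y)
              = ∫⁻ y, G' (x, y) ∂((volume.restrict S).prod (volume.restrict T)) := by
                rw [Measure.prod_restrict, ← Measure.volume_eq_prod]
            _ = ∫⁻ y in S, ∫⁻ t in T, G' (x, y, t) :=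
                lintegral_prod _ (hG'.comp measurable_prodMk_left).aemeasurable
  set E := Ioo (t₀ - (1+κ)*r^2) (t₀ + (1+κ)*r^2) with hEdef
  set Cp' := ENNReal.ofReal (Cp p) with hCp'
  -- key slice estimate
  have key1 : ∀ x : Fin (n-1) → ℝ, ∀ xn ∈ Ioo (0:ℝ) r,
      (∫⁻ t in Ioo (t₀ - r^2) (t₀ + r^2), G (x, xn, t)) ≤
        Cp' * ∫⁻ s in E, H (x, xn, s) := by
    intro x xn hxn
    have hsec : Measurable fun s => f (x, xn, s) :=
      hf.comp (measurable_const.prodMk (measurable_const.prodMk measurable_id))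
    have hgfin : ENNReal.ofReal (g (x, xn)) ≠ ∞ := ENNReal.ofReal_ne_top
    calc (∫⁻ t in Ioo (t₀ - r^2) (t₀ + r^2), G (x, xn, t))
        = (∫⁻ t in Ioo (t₀ - r^2) (t₀ + r^2),
            tMaxE (κ * xn^2) (fun s => f (x, xn, s)) t ^ p) * ENNReal.ofReal (g (x, xn)) := by
          rw [← lintegral_mul_const' _ _ hgfin]
      _ ≤ (Cp' * ∫⁻ s in E, ENNReal.ofReal (f (x, xn, s)) ^ p) * ENNReal.ofReal (g (x, xn)) :=
          mul_le_mul_left (slice_bound p hp hκ hr hxn.1 hxn.2 _ hsec) _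
      _ = Cp' * ∫⁻ s in E, ENNReal.ofReal (f (x, xn, s)) ^ p * ENNReal.ofReal (g (x, xn)) := by
          rw [mul_assoc, ← lintegral_mul_const' _ _ hgfin]
      _ = Cp' * ∫⁻ s in E, H (x, xn, s) := by
          refine congrArg _ (lintegral_congr fun s => ?_)
          rw [hH]
          simp only
          rw [ENNReal.ofReal_rpow_of_nonneg (hf0 (x, xn, s)) (by linarith : (0:ℝ) ≤ p)]
  -- monotone chain
  have main1 : ∫⁻ q in carlesonBox (n-1) x₀ t₀ r, G q ≤
      Cp' * ∫⁻ q in A ×ˢ ((Ioo (0:ℝ) r) ×ˢ E), H q := by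
    rw [boxEq t₀, hiter _ _ measurableSet_Ioo measurableSet_Ioo G hGm,
      hiter _ _ measurableSet_Ioo measurableSet_Ioo H hHm, ← lintegral_const_mul' _ _
        ENNReal.ofReal_ne_top]
    refine lintegral_mono fun x => ?_
    rw [← lintegral_const_mul' _ _ ENNReal.ofReal_ne_top]
    refine lintegral_mono_ae ((ae_restrict_iff' measurableSet_Ioo).2
      (Filter.Eventually.of_forall fun xn hxn => ?_))
    exact key1 x xn hxn
  -- covering of the enlarged box
  set a0 := t₀ - (1+κ)*r^2 with ha0
  set N := ⌈2*(1+κ)⌉₊ with hN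
  have hr2 : (0:ℝ) < r^2 := by positivity
  have hcov : A ×ˢ ((Ioo (0:ℝ) r) ×ˢ E) ⊆
      ⋃ k : ℕ, A ×ˢ ((Ioo (0:ℝ) r) ×ˢ (Ioo (a0 + k*r^2) (a0 + (k+2)*r^2) ∩ E)) := by
    rintro ⟨x, xn, t⟩ ⟨hx, hxn, ht⟩
    set y := (t - a0)/r^2 with hy
    have hy0 : 0 < y := div_pos (by simp only [hEdef, mem_Ioo] at ht; linarith [ht.1]) hr2
    have hceil1 : 1 ≤ ⌈y⌉₊ := Nat.one_le_ceil_iff.2 hy0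
    set k := ⌈y⌉₊ - 1 with hk
    have hcast : ((k:ℕ) : ℝ) = (⌈y⌉₊ : ℝ) - 1 := by
      rw [hk, Nat.cast_sub hceil1, Nat.cast_one]
    have h1 : (k:ℝ) < y := by
      have := Nat.ceil_lt_add_one hy0.le
      rw [hcast]; linarith
    have h2 : y ≤ (k:ℝ) + 1 := by
      have := Nat.le_ceil y
      rw [hcast]; linarith
    have hty : t = a0 + y * r^2 := by rw [hy]; field_simp; ring
    refine mem_iUnion.2 ⟨k, hx, hxn, ⟨⟨?_, ?_⟩, ht⟩⟩
    · show a0 + (k:ℝ)*r^2 < t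
      rw [hty]; nlinarith
    · show t < a0 + ((k:ℝ)+2)*r^2
      rw [hty]; nlinarith
  have hsplit : ∫⁻ q in A ×ˢ ((Ioo (0:ℝ) r) ×ˢ E), H q ≤
      (N : ℝ≥0∞) * ENNReal.ofReal (M * r^(n+1)) := by
    calc ∫⁻ q in A ×ˢ ((Ioo (0:ℝ) r) ×ˢ E), H q
        ≤ ∑' k : ℕ, ∫⁻ q in A ×ˢ ((Ioo (0:ℝ) r) ×ˢ
            (Ioo (a0 + k*r^2) (a0 + (k+2)*r^2) ∩ E)), H q :=
          le_trans (lintegral_mono_set hcov) (lintegral_iUnion_le _ _)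
      _ ≤ ∑' k : ℕ, (if k < N then ENNReal.ofReal (M * r^(n+1)) else 0) := by
          refine ENNReal.tsum_le_tsum fun k => ?_
          by_cases hkN : k < N
          · rw [if_pos hkN]
            have hsub : A ×ˢ ((Ioo (0:ℝ) r) ×ˢ (Ioo (a0 + k*r^2) (a0 + (k+2)*r^2) ∩ E)) ⊆
                carlesonBox (n-1) x₀ (a0 + (k+1)*r^2) r := by
              rw [boxEq (a0 + (k+1)*r^2)]
              refine prod_mono_right (prod_mono_right ?_)
              refine subset_trans inter_subset_left ?_
              exact Ioo_subset_Ioo (le_of_eq (by ring)) (le_of_eq (by ring))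
            exact le_trans (lintegral_mono_set hsub) (hcarl x₀ (a0 + (k+1)*r^2) r hr)
          · rw [if_neg hkN]
            have hNk : (N:ℝ) ≤ (k:ℝ) := by exact_mod_cast Nat.le_of_not_lt hkN
            have hN2 : 2*(1+κ) ≤ (N:ℝ) := Nat.le_ceil _
            have hempty : Ioo (a0 + k*r^2) (a0 + (k+2)*r^2) ∩ E = ∅ := by
              rw [eq_empty_iff_forall_notMem]
              rintro s ⟨hs1, hs2⟩
              rw [mem_Ioo] at hs1
              rw [hEdef, mem_Ioo] at hs2
              have : t₀ + (1+κ)*r^2 = a0 + 2*(1+κ)*r^2 := by rw [ha0]; ring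
              nlinarith [hs1.1, hs2.2]
            rw [hempty]
            simp
      _ = (N : ℝ≥0∞) * ENNReal.ofReal (M * r^(n+1)) := by
          rw [tsum_eq_sum (s := Finset.range N)
            (fun k hk => if_neg (by simpa using hk))]
          rw [Finset.sum_ite_of_true (fun k hk => Finset.mem_range.1 hk)]
          rw [Finset.sum_const, Finset.card_range, nsmul_eq_mul]
  -- conclude
  calc ∫⁻ q in carlesonBox (n-1) x₀ t₀ r, G q
      ≤ Cp' * ((N : ℝ≥0∞) * ENNReal.ofReal (M * r^(n+1))) :=
        le_trans main1 (mul_le_mul_right hsplit _)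
    _ ≤ ENNReal.ofReal (Cp p * 5 * max 1 κ * M * r ^ (n + 1)) := by
        rw [hCp', ← ENNReal.ofReal_natCast N, ← ENNReal.ofReal_mul (by positivity),
          ← ENNReal.ofReal_mul (Cp_pos hp).le]
        refine ENNReal.ofReal_le_ofReal ?_
        have hN5 : (N:ℝ) ≤ 5 * max 1 κ := by
          have h1 : (N:ℝ) < 2*(1+κ) + 1 := Nat.ceil_lt_add_one (by linarith)
          rcases le_total κ 1 with hk1 | hk1
          · rw [max_eq_left hk1]; linarith
          · rw [max_eq_right hk1]; linarith
        calc Cp p * ((N:ℝ) * (M * r^(n+1)))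
            = (Cp p * (M * r^(n+1))) * (N:ℝ) := by ring
          _ ≤ (Cp p * (M * r^(n+1))) * (5 * max 1 κ) := by
              refine mul_le_mul_of_nonneg_left hN5 ?_
              have := Cp_pos hp
              positivity
          _ = Cp p * 5 * max 1 κ * M * r^(n+1) := by ring
end

section
/- Let (X, μ) be a measure space, p ∈ (0, ∞), and let f, g : X → [0, ∞) be measurable with ∫ f^p dμ < ∞. Suppose there are constants C > 0 and γ > 0 with 2^p C γ² ≤ 1/2 such that for every ν > 0, μ({f > ν} ∩ {g ≤ γν}) ≤ C γ² μ({f > ν/2}). Then ∫ f^p dμ ≤ 2 γ^{-p} ∫ g^p dμ. -/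
open MeasureTheory Set

private lemma stmt9_aux {X : Type*} [MeasurableSpace X] (μ : Measure X) (p : ℝ) (hp : 0 < p)
    (h : X → ℝ) (hh : Measurable h) (hh0 : ∀ x, 0 ≤ h x) :
    ∫⁻ x, ENNReal.ofReal (h x ^ p) ∂μ =
      ENNReal.ofReal p * ∫⁻ t in Ioi 0, μ {a | t < h a} * ENNReal.ofReal (t ^ (p - 1)) :=
  lintegral_rpow_eq_lintegral_meas_lt_mul μ (Filter.Eventually.of_forall hh0)
    hh.aemeasurable hp

/-- abstract good-λ argument. If `μ({f > ν} ∩ {g ≤ γν}) ≤ Cγ² μ({f > ν/2})`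
for all `ν > 0` and `2^p C γ² ≤ 1/2`, and `∫ f^p dμ < ∞`, then
`∫ f^p dμ ≤ 2 γ^{-p} ∫ g^p dμ`. -/
theorem stmt9 {X : Type*} [MeasurableSpace X] (μ : Measure X) (p : ℝ) (hp : 0 < p)
    (f g : X → ℝ) (hf : Measurable f) (hg : Measurable g)
    (hf0 : ∀ x, 0 ≤ f x) (hg0 : ∀ x, 0 ≤ g x)
    (hfin : ∫⁻ x, ENNReal.ofReal (f x ^ p) ∂μ < ⊤)
    (C γ : ℝ) (hC : 0 < C) (hγ : 0 < γ) (hsmall : 2 ^ p * C * γ ^ 2 ≤ 1 / 2)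
    (hgl : ∀ ν : ℝ, 0 < ν →
      μ ({x | ν < f x} ∩ {x | g x ≤ γ * ν}) ≤
        ENNReal.ofReal (C * γ ^ 2) * μ {x | ν / 2 < f x}) :
    ∫⁻ x, ENNReal.ofReal (f x ^ p) ∂μ ≤
      ENNReal.ofReal (2 * γ ^ (-p)) * ∫⁻ x, ENNReal.ofReal (g x ^ p) ∂μ := by
  set F : X → ℝ := fun x => 2 * f x with hF
  set G : X → ℝ := fun x => g x / γ with hG
  have hFm : Measurable F := hf.const_mul 2
  have hGm : Measurable G := hg.div_const γ
  have hF0 : ∀ x, 0 ≤ F x := fun x => mul_nonneg (by norm_num) (hf0 x)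
  have hG0 : ∀ x, 0 ≤ G x := fun x => div_nonneg (hg0 x) hγ.le
  set I := ∫⁻ x, ENNReal.ofReal (f x ^ p) ∂μ with hI
  set J := ∫⁻ x, ENNReal.ofReal (g x ^ p) ∂μ with hJ
  -- scaling identities
  have hIF : ∫⁻ x, ENNReal.ofReal (F x ^ p) ∂μ = ENNReal.ofReal (2 ^ p) * I := by
    rw [hI, ← lintegral_const_mul' _ _ ENNReal.ofReal_ne_top]
    refine lintegral_congr fun x => ?_
    rw [← ENNReal.ofReal_mul (Real.rpow_nonneg (by norm_num) _)]
    congr 1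
    rw [Real.mul_rpow (by norm_num) (hf0 x)]
  have hJG : ∫⁻ x, ENNReal.ofReal (G x ^ p) ∂μ = ENNReal.ofReal (γ ^ (-p)) * J := by
    rw [hJ, ← lintegral_const_mul' _ _ ENNReal.ofReal_ne_top]
    refine lintegral_congr fun x => ?_
    rw [← ENNReal.ofReal_mul (Real.rpow_nonneg hγ.le _)]
    congr 1
    rw [Real.div_rpow (hg0 x) hγ.le, Real.rpow_neg hγ.le, inv_mul_eq_div]
  -- pointwise tail inequality
  have tail : ∀ t : ℝ, 0 < t →
      μ {a | t < f a} ≤ ENNReal.ofReal (C * γ ^ 2) * μ {a | t < F a} + μ {a | t < G a} := by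
    intro t ht
    have hsub : {a | t < f a} ⊆ ({x | t < f x} ∩ {x | g x ≤ γ * t}) ∪ {a | t < G a} := by
      intro a ha
      by_cases hga : g a ≤ γ * t
      · exact Or.inl ⟨ha, hga⟩
      · exact Or.inr (by simpa [hG, lt_div_iff₀ hγ, mul_comm] using (not_le.mp hga))
    calc μ {a | t < f a} ≤ μ (({x | t < f x} ∩ {x | g x ≤ γ * t}) ∪ {a | t < G a}) :=
          measure_mono hsub
      _ ≤ μ ({x | t < f x} ∩ {x | g x ≤ γ * t}) + μ {a | t < G a} := measure_union_le _ _
      _ ≤ ENNReal.ofReal (C * γ ^ 2) * μ {x | t / 2 < f x} + μ {a | t < G a} :=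
          add_le_add_left (hgl t ht) _
      _ = ENNReal.ofReal (C * γ ^ 2) * μ {a | t < F a} + μ {a | t < G a} := by
          have hset : {x | t / 2 < f x} = {a | t < F a} := by
            ext a
            simp only [Set.mem_setOf_eq, hF]
            rw [div_lt_iff₀ (by norm_num : (0:ℝ) < 2), mul_comm]
          rw [hset]
  -- layer cake integrals
  set A := ∫⁻ t in Ioi (0:ℝ), μ {a | t < f a} * ENNReal.ofReal (t ^ (p - 1)) with hA
  set AF := ∫⁻ t in Ioi (0:ℝ), μ {a | t < F a} * ENNReal.ofReal (t ^ (p - 1)) with hAF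
  set AG := ∫⁻ t in Ioi (0:ℝ), μ {a | t < G a} * ENNReal.ofReal (t ^ (p - 1)) with hAG
  have eqf : I = ENNReal.ofReal p * A := stmt9_aux μ p hp f hf hf0
  have eqF : ENNReal.ofReal (2 ^ p) * I = ENNReal.ofReal p * AF := by
    rw [← hIF]; exact stmt9_aux μ p hp F hFm hF0
  have eqG : ENNReal.ofReal (γ ^ (-p)) * J = ENNReal.ofReal p * AG := by
    rw [← hJG]; exact stmt9_aux μ p hp G hGm hG0
  -- A ≤ Cγ² AF + AG
  have mf : Measurable fun t : ℝ => μ {a | t < F a} := by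
    have : Antitone fun t : ℝ => μ {a | t < F a} := fun s t hst =>
      measure_mono fun a ha => lt_of_le_of_lt hst ha
    exact this.measurable
  have hAle : A ≤ ENNReal.ofReal (C * γ ^ 2) * AF + AG := by
    calc A ≤ ∫⁻ t in Ioi (0:ℝ),
        (ENNReal.ofReal (C * γ ^ 2) * μ {a | t < F a} + μ {a | t < G a}) *
          ENNReal.ofReal (t ^ (p - 1)) := by
          refine setLIntegral_mono' measurableSet_Ioi fun t ht => ?_
          exact mul_le_mul_left (tail t ht) _
      _ = ENNReal.ofReal (C * γ ^ 2) * AF + AG := by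
          have mw : Measurable fun t : ℝ => ENNReal.ofReal (t ^ (p - 1)) := by fun_prop
          rw [hAF, hAG, ← lintegral_const_mul' _ _ ENNReal.ofReal_ne_top,
            ← lintegral_add_left (show Measurable fun t : ℝ => ENNReal.ofReal (C * γ ^ 2) * (μ {a | t < F a} * ENNReal.ofReal (t ^ (p - 1))) from measurable_const.mul (mf.mul mw))]
          refine lintegral_congr fun t => ?_
          ring
  -- combine
  have key : I ≤ ENNReal.ofReal (C * γ ^ 2) * (ENNReal.ofReal (2 ^ p) * I) +
      ENNReal.ofReal (γ ^ (-p)) * J := by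
    calc I = ENNReal.ofReal p * A := eqf
      _ ≤ ENNReal.ofReal p * (ENNReal.ofReal (C * γ ^ 2) * AF + AG) :=
          mul_le_mul_right hAle _
      _ = ENNReal.ofReal (C * γ ^ 2) * (ENNReal.ofReal p * AF) + ENNReal.ofReal p * AG := by
          ring
      _ = _ := by rw [← eqF, ← eqG]
  have half : ENNReal.ofReal (C * γ ^ 2) * ENNReal.ofReal (2 ^ p) ≤ 2⁻¹ := by
    rw [← ENNReal.ofReal_mul (by positivity)]
    calc ENNReal.ofReal (C * γ ^ 2 * 2 ^ p) ≤ ENNReal.ofReal (1 / 2) := by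
          apply ENNReal.ofReal_le_ofReal; linarith [hsmall]
      _ = 2⁻¹ := by rw [ENNReal.ofReal_div_of_pos (by norm_num)]; norm_num
  have key2 : I ≤ 2⁻¹ * I + ENNReal.ofReal (γ ^ (-p)) * J := by
    refine key.trans (add_le_add_left ?_ _)
    rw [← mul_assoc]
    exact mul_le_mul_left half I
  have hIne : I ≠ ⊤ := hfin.ne
  set b := ENNReal.ofReal (γ ^ (-p)) * J with hb
  have key2' : I ≤ I / 2 + b := by
    refine key2.trans (add_le_add_left (le_of_eq ?_) _)
    rw [ENNReal.div_eq_inv_mul]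
  have hhalf2 : I / 2 ≤ b := by
    rw [← ENNReal.sub_half hIne]
    exact tsub_le_iff_left.mpr key2'
  calc I = I / 2 + I / 2 := (ENNReal.add_halves I).symm
    _ ≤ b + b := add_le_add hhalf2 hhalf2
    _ = 2 * b := (two_mul b).symm
    _ = ENNReal.ofReal (2 * γ ^ (-p)) * J := by
        rw [hb, ENNReal.ofReal_mul (by norm_num : (0:ℝ) ≤ 2), ENNReal.ofReal_ofNat, mul_assoc]
end
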